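/- arXiv:1706.02335 — 2 statements merged into one kernel-verified Lean document; each statement's English description precedes it below -/
import Mathlib

section
/- There exists an outerplanar graph G with maximum degree 3 and girth 3 such that χ_i(G) = 4. -/
open SimpleGraph

variable {V : Type*}

/-- An injective coloring: vertices with a common neighbor get distinct colors. -/
def IsInjColoring (G : SimpleGraph V) {k : ℕ} (c : V → Fin k) : Prop :=
  ∀ u v w : V, G.Adj u w → G.Adj v w → u ≠ v → c u ≠ c v

/-- The injective chromatic number: least `k` admitting an injective `k`-coloring. -/
noncomputable def injChrom (G : SimpleGraph V) : ℕ :=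
  sInf {k : ℕ | ∃ c : V → Fin k, IsInjColoring G c}

/-- Degree of a vertex. -/
noncomputable def deg (G : SimpleGraph V) (v : V) : ℕ :=
  Nat.card {u : V | G.Adj v u}

/-- Maximum degree. -/
noncomputable def maxDeg [Fintype V] (G : SimpleGraph V) : ℕ :=
  Finset.univ.sup (deg G)

/-- The common-neighbor graph `G^(2)`. -/
def cnGraph (G : SimpleGraph V) : SimpleGraph V where
  Adj u v := u ≠ v ∧ ∃ w, G.Adj u w ∧ G.Adj v w
  symm := by constructor; rintro u v ⟨h, w, hu, hv⟩; exact ⟨h.symm, w, hv, hu⟩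
  loopless := by constructor; rintro u ⟨h, -⟩; exact h rfl

/-- The square of a graph: distinct vertices at distance at most 2. -/
def sqGraph (G : SimpleGraph V) : SimpleGraph V where
  Adj u v := u ≠ v ∧ (G.Adj u v ∨ ∃ w, G.Adj u w ∧ G.Adj v w)
  symm := by
    constructor
    rintro u v ⟨h, hc⟩
    refine ⟨h.symm, ?_⟩
    rcases hc with h' | ⟨w, hu, hv⟩
    · exact Or.inl h'.symm
    · exact Or.inr ⟨w, hv, hu⟩
  loopless := by constructor; rintro u ⟨h, -⟩; exact h rfl

/-- `H` is a minor of `G`, via branch sets. -/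
def IsMinor {W : Type*} (H : SimpleGraph W) (G : SimpleGraph V) : Prop :=
  ∃ B : W → Set V,
    (∀ w, (B w).Nonempty) ∧
    (∀ w, (G.induce (B w)).Connected) ∧
    (Pairwise fun w₁ w₂ => Disjoint (B w₁) (B w₂)) ∧
    ∀ ⦃w₁ w₂⦄, H.Adj w₁ w₂ → ∃ v₁ ∈ B w₁, ∃ v₂ ∈ B w₂, G.Adj v₁ v₂

/-- Outerplanar: no `K₄` minor and no `K_{2,3}` minor. -/
def Outerplanar (G : SimpleGraph V) : Prop :=
  ¬ IsMinor (completeGraph (Fin 4)) G ∧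
  ¬ IsMinor (completeBipartiteGraph (Fin 2) (Fin 3)) G

/-- Two-connected: at least 3 vertices and deleting any vertex leaves it connected. -/
def TwoConnected [Fintype V] (G : SimpleGraph V) : Prop :=
  3 ≤ Fintype.card V ∧
  ∀ v : V, (((⊤ : G.Subgraph).deleteVerts {v}).coe).Connected

/-- A chordless (induced) cycle. In a 2-connected outerplane graph these are
exactly the boundaries of the inner faces (when the graph is not a cycle). -/
def IsInducedCycle (G : SimpleGraph V) {u : V} (p : G.Walk u u) : Prop :=
  p.IsCycle ∧ ∀ a b : V, a ∈ p.support → b ∈ p.support → G.Adj a b → s(a, b) ∈ p.edges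


/-- The diamond graph: `K₄` minus the edge `{0, 3}`. -/
def diamondG : SimpleGraph (Fin 4) where
  Adj u v := u ≠ v ∧ ((u,v) ∈ [((0:Fin 4),(1:Fin 4)),(0,2),(1,2),(1,3),(2,3)] ∨
                      (v,u) ∈ [((0:Fin 4),(1:Fin 4)),(0,2),(1,2),(1,3),(2,3)])
  symm := by constructor; rintro u v ⟨h1, h2⟩; exact ⟨h1.symm, h2.symm⟩
  loopless := by constructor; rintro u ⟨h, -⟩; exact h rfl

instance : DecidableRel diamondG.Adj := fun u v => by unfold diamondG; exact instDecidableAnd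

lemma diamond_rep_inj {W : Type*} (B : W → Set (Fin 4)) (hne : ∀ w, (B w).Nonempty)
    (hdisj : Pairwise fun w₁ w₂ => Disjoint (B w₁) (B w₂)) :
    Function.Injective (fun w => (hne w).choose) := by
  intro w1 w2 h
  by_contra hne'
  exact (hdisj hne').ne_of_mem (hne w1).choose_spec (hne w2).choose_spec h

lemma diamond_noK23 : ¬ IsMinor (completeBipartiteGraph (Fin 2) (Fin 3)) diamondG := by
  rintro ⟨B, hne, -, hdisj, -⟩
  have := Fintype.card_le_of_injective _ (diamond_rep_inj B hne hdisj)
  simp at this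

lemma diamond_noK4 : ¬ IsMinor (completeGraph (Fin 4)) diamondG := by
  rintro ⟨B, hne, -, hdisj, hadj⟩
  set rep := fun w => (hne w).choose with hrep
  have hinj : Function.Injective rep := diamond_rep_inj B hne hdisj
  have hsurj : Function.Surjective rep := (Finite.injective_iff_surjective).mp hinj
  have hsing : ∀ w x, x ∈ B w → x = rep w := by
    intro w x hx
    obtain ⟨w', hw'⟩ := hsurj x
    rcases eq_or_ne w' w with rfl | hww
    · exact hw'.symm
    · exact absurd hw' (fun h => (hdisj hww).ne_of_mem (h ▸ (hne w').choose_spec) hx rfl)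
  obtain ⟨w1, hw1⟩ := hsurj 0
  obtain ⟨w2, hw2⟩ := hsurj 3
  have hne12 : w1 ≠ w2 := fun h => by simp [h, hw2] at hw1
  obtain ⟨v1, hv1, v2, hv2, hA⟩ := hadj (by exact hne12 : (completeGraph (Fin 4)).Adj w1 w2)
  rw [hsing w1 v1 hv1, hw1] at hA
  rw [hsing w2 v2 hv2, hw2] at hA
  revert hA; decide

def diamondCyc : diamondG.Walk 0 0 :=
  Walk.cons (by decide) (Walk.cons (by decide : diamondG.Adj 1 2)
    (Walk.cons (by decide : diamondG.Adj 2 0) Walk.nil))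

lemma diamondCyc_isCycle : diamondCyc.IsCycle := by
  rw [Walk.isCycle_def, Walk.isTrail_def]
  exact ⟨by decide, by simp [diamondCyc], by decide⟩

lemma diamond_girth : diamondG.girth = 3 := by
  have h1 : diamondG.egirth ≤ 3 := by
    have : diamondG.egirth ≤ (diamondCyc.length : ℕ∞) := by
      apply iInf_le_of_le 0
      apply iInf_le_of_le diamondCyc
      exact iInf_le _ diamondCyc_isCycle
    simpa [diamondCyc] using this
  have h2 : (3 : ℕ∞) ≤ diamondG.egirth := three_le_egirth
  have : diamondG.egirth = 3 := le_antisymm h1 h2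
  simp [girth, this]

lemma diamond_maxDeg : maxDeg diamondG = 3 := by
  have h : ∀ v, deg diamondG v = (Finset.univ.filter (diamondG.Adj v)).card := by
    intro v
    rw [deg, Nat.card_eq_fintype_card, Fintype.card_subtype]; rfl
  unfold maxDeg
  rw [show deg diamondG = fun v => (Finset.univ.filter (diamondG.Adj v)).card from funext h]
  decide

lemma diamond_injChrom : injChrom diamondG = 4 := by
  have hcn : ∀ u v : Fin 4, u ≠ v → ∃ w, diamondG.Adj u w ∧ diamondG.Adj v w := by decide
  apply le_antisymm
  · apply Nat.sInf_le
    exact ⟨id, fun u v w _ _ huv h => huv h⟩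
  · have h4 : (4:ℕ) ∈ {k : ℕ | ∃ c : Fin 4 → Fin k, IsInjColoring diamondG c} :=
      ⟨id, fun u v w _ _ huv h => huv h⟩
    apply le_csInf ⟨4, h4⟩
    rintro k ⟨c, hc⟩
    have hinj : Function.Injective c := by
      intro u v h
      by_contra huv
      obtain ⟨w, h1, h2⟩ := hcn u v huv
      exact hc u v w h1 h2 huv h
    have := Fintype.card_le_of_injective c hinj
    simpa using this

/-- there is an outerplanar graph with `Δ = 3`, girth 3 and `χ_i = 4`. -/
theorem stmt11 :
    ∃ (n : ℕ) (G : SimpleGraph (Fin n)),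
      Outerplanar G ∧ maxDeg G = 3 ∧ G.girth = 3 ∧ injChrom G = 4 := by
  exact ⟨4, diamondG, ⟨diamond_noK4, diamond_noK23⟩, diamond_maxDeg, diamond_girth, diamond_injChrom⟩
end

section
/- Let G be a connected graph and L a list assignment with |L(v)| ≥ deg(v) for all v. If |L(v)| > deg(v) for some vertex v, or some block of G is neither a complete graph nor an induced odd cycle, then G has a proper coloring choosing each vertex's color from its list. -/
open SimpleGraph

variable {V : Type*}

/-- A vertex set inducing a connected subgraph with no cut vertex. -/
def NoCutVertex (G : SimpleGraph V) (B : Set V) : Prop :=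
  (G.induce B).Connected ∧ ∀ v ∈ B, B ≠ {v} → (G.induce (B \ {v})).Connected

/-- A block: a maximal set of vertices inducing a connected subgraph
with no cut vertex. -/
def IsBlock (G : SimpleGraph V) (B : Set V) : Prop :=
  NoCutVertex G B ∧ ∀ B' : Set V, B ⊆ B' → NoCutVertex G B' → B = B'

namespace ERT

open Classical

variable {V : Type*} (G : SimpleGraph V)

/-- Adjacency within a vertex set. -/
def AdjIn (S : Set V) (x y : V) : Prop := x ∈ S ∧ y ∈ S ∧ G.Adj x y

/-- Reachability within a vertex set. -/
def RIn (S : Set V) : V → V → Prop := Relation.ReflTransGen (AdjIn G S)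

/-- Connectedness of the set `S` (within the ambient graph `G`). -/
def ConnOn (S : Set V) : Prop := S.Nonempty ∧ ∀ x ∈ S, ∀ y ∈ S, RIn G S x y

/-- Degree within a set. -/
noncomputable def dOn (S : Set V) (v : V) : ℕ := {u | u ∈ S ∧ G.Adj v u}.ncard

variable {G : SimpleGraph V}

theorem AdjIn.symm {S : Set V} {x y : V} (h : AdjIn G S x y) : AdjIn G S y x :=
  ⟨h.2.1, h.1, h.2.2.symm⟩

theorem adjIn_symmetric (S : Set V) : Symmetric (AdjIn G S) := fun _ _ h => h.symm

theorem RIn.refl {S : Set V} {x : V} : RIn G S x x := Relation.ReflTransGen.refl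

theorem RIn.symm {S : Set V} {x y : V} (h : RIn G S x y) : RIn G S y x :=
  by haveI : Std.Symm (AdjIn G S) := ⟨adjIn_symmetric S⟩; exact Relation.ReflTransGen.stdSymm.symm _ _ h

theorem RIn.trans {S : Set V} {x y z : V} (h : RIn G S x y) (h' : RIn G S y z) :
    RIn G S x z := Relation.ReflTransGen.trans h h'

theorem RIn.mono {S T : Set V} (hST : S ⊆ T) {x y : V} (h : RIn G S x y) : RIn G T x y := by
  induction h with
  | refl => exact RIn.refl
  | tail _ hbc ih => exact ih.tail ⟨hST hbc.1, hST hbc.2.1, hbc.2.2⟩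

theorem RIn.mem_right {S : Set V} {x y : V} (h : RIn G S x y) (hx : x ∈ S) : y ∈ S := by
  induction h with
  | refl => exact hx
  | tail _ hbc _ => exact hbc.2.1

theorem RIn.single {S : Set V} {x y : V} (h : AdjIn G S x y) : RIn G S x y :=
  Relation.ReflTransGen.single h

/-- If `x ≠ y` are connected within `S` then `x` has a neighbour in `S`. -/
theorem RIn.exists_adj {S : Set V} {x y : V} (h : RIn G S x y) (hxy : x ≠ y) :
    ∃ z, AdjIn G S x z := by
  rcases h.cases_head with rfl | ⟨c, hc, _⟩
  · exact absurd rfl hxy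
  · exact ⟨c, hc⟩

/-- Reachability in exactly `n` steps. -/
def RInN (S : Set V) : ℕ → V → V → Prop
  | 0, x, y => x = y
  | (n+1), x, y => ∃ z, AdjIn G S x z ∧ RInN S n z y

theorem RInN.toRIn {S : Set V} : ∀ {n : ℕ} {x y : V}, RInN (G := G) S n x y → RIn G S x y
  | 0, x, y, h => by rw [show x = y from h]; exact RIn.refl
  | (n+1), x, y, h => by
      obtain ⟨z, hxz, hzy⟩ := h
      exact (RIn.single hxz).trans (RInN.toRIn hzy)

theorem RInN.snoc {S : Set V} : ∀ {n : ℕ} {x y z : V}, RInN (G := G) S n x y →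
    AdjIn G S y z → RInN (G := G) S (n+1) x z
  | 0, x, y, z, h, ha => by rw [show x = y from h]; exact ⟨z, ha, rfl⟩
  | (n+1), x, y, z, h, ha => by
      obtain ⟨w, hxw, hwy⟩ := h
      exact ⟨w, hxw, RInN.snoc hwy ha⟩

theorem RIn.exists_rInN {S : Set V} {x y : V} (h : RIn G S x y) :
    ∃ n, RInN (G := G) S n x y := by
  induction h with
  | refl => exact ⟨0, rfl⟩
  | tail _ hbc ih => obtain ⟨n, hn⟩ := ih; exact ⟨n+1, hn.snoc hbc⟩

/-- Any walk out of `K` includes an edge leaving `K`. -/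
theorem RInN.exitEdge {S K : Set V} : ∀ {m : ℕ} {z y : V}, RInN (G := G) S m z y →
    z ∈ K → y ∉ K → ∃ p ∈ K, ∃ q ∈ S, G.Adj p q ∧ q ∉ K
  | 0, z, y, h, hz, hy => absurd (show z = y from h ▸ rfl) (fun e => hy (e ▸ hz))
  | (m+1), z, y, h, hz, hy => by
      obtain ⟨w, hzw, hwy⟩ := h
      by_cases hw : w ∈ K
      · exact RInN.exitEdge hwy hw hy
      · exact ⟨z, hz, w, hzw.2.1, hzw.2.2, hw⟩

/-- If the only door out of `K` (within `T`) is `v`, a walk leaving `K` passes `v`: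
    truncation giving the suffix from `v`. -/
theorem RInN.exitAt {T K : Set V} {v : V}
    (hdoor : ∀ p ∈ K, ∀ q ∈ T, G.Adj p q → q ∉ K → q = v) :
    ∀ {m : ℕ} {z y : V}, RInN (G := G) T m z y → z ∈ K → y ∉ K →
      ∃ j < m, RInN (G := G) T j v y
  | 0, z, y, h, hz, hy => absurd (show z = y from h ▸ rfl) (fun e => hy (e ▸ hz))
  | (m+1), z, y, h, hz, hy => by
      obtain ⟨w, hzw, hwy⟩ := h
      by_cases hw : w ∈ K
      · obtain ⟨j, hj, hjw⟩ := RInN.exitAt hdoor hwy hw hy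
        exact ⟨j, Nat.lt_succ_of_lt hj, hjw⟩
      · have : w = v := hdoor z hz w hzw.2.1 hzw.2.2 hw
        exact ⟨m, Nat.lt_succ_self m, this ▸ hwy⟩

/-- Confinement: a walk from inside `K` leaving through door `v` reaches `v`
within `(K ∩ T) ∪ {v}`. -/
theorem RInN.confine {T K : Set V} {v : V}
    (hdoor : ∀ p ∈ K, ∀ q ∈ T, G.Adj p q → q ∉ K → q = v) :
    ∀ {m : ℕ} {z y : V}, RInN (G := G) T m z y → z ∈ K → y ∉ K →
      RIn G ((K ∩ T) ∪ {v}) z v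
  | 0, z, y, h, hz, hy => absurd (show z = y from h ▸ rfl) (fun e => hy (e ▸ hz))
  | (m+1), z, y, h, hz, hy => by
      obtain ⟨w, hzw, hwy⟩ := h
      by_cases hw : w ∈ K
      · have ih := RInN.confine hdoor hwy hw hy
        have e1 : AdjIn G ((K ∩ T) ∪ {v}) z w :=
          ⟨Or.inl ⟨hz, hzw.1⟩, Or.inl ⟨hw, hzw.2.1⟩, hzw.2.2⟩
        exact (RIn.single e1).trans ih
      · have hwv : w = v := hdoor z hz w hzw.2.1 hzw.2.2 hw
        have e1 : AdjIn G ((K ∩ T) ∪ {v}) z v :=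
          ⟨Or.inl ⟨hz, hzw.1⟩, Or.inr rfl, hwv ▸ hzw.2.2⟩
        exact RIn.single e1

/-- Avoidance: a walk between vertices outside `K`, where the only door of `K` is `v`,
can be rerouted to avoid `K` entirely. -/
theorem RInN.avoid {T K : Set V} {v : V}
    (hdoor : ∀ p ∈ K, ∀ q ∈ T, G.Adj p q → q ∉ K → q = v) :
    ∀ (m : ℕ) {z y : V}, RInN (G := G) T m z y → z ∉ K → y ∉ K → RIn G (T \ K) z y := by
  intro m
  induction m using Nat.strong_induction_on with
  | _ m IH =>
    intro z y h hz hy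
    rcases m with _ | m
    · rw [show z = y from h]; exact RIn.refl
    · obtain ⟨w, hzw, hwy⟩ := h
      by_cases hw : w ∈ K
      · obtain ⟨j, hj, hjv⟩ := RInN.exitAt hdoor hwy hw hy
        have hvz : v = z := (hdoor w hw z hzw.1 hzw.2.2.symm hz).symm
        exact IH j (Nat.lt_succ_of_lt hj) (hvz ▸ hjv) (hvz ▸ hz) hy
      · have e1 : AdjIn G (T \ K) z w := ⟨⟨hzw.1, hz⟩, ⟨hzw.2.1, hw⟩, hzw.2.2⟩
        exact (RIn.single e1).trans (IH m (Nat.lt_succ_self m) hwy hw hy)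

theorem RIn.avoid' {T K : Set V} {v : V}
    (hdoor : ∀ p ∈ K, ∀ q ∈ T, G.Adj p q → q ∉ K → q = v) {z y : V}
    (h : RIn G T z y) (hz : z ∉ K) (hy : y ∉ K) : RIn G (T \ K) z y := by
  obtain ⟨m, hm⟩ := h.exists_rInN
  exact RInN.avoid hdoor m hm hz hy

theorem RIn.confine' {T K : Set V} {v : V}
    (hdoor : ∀ p ∈ K, ∀ q ∈ T, G.Adj p q → q ∉ K → q = v) {z y : V}
    (h : RIn G T z y) (hz : z ∈ K) (hy : y ∉ K) : RIn G ((K ∩ T) ∪ {v}) z v := by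
  obtain ⟨m, hm⟩ := h.exists_rInN
  exact hm.confine hdoor hz hy

theorem RIn.exitEdge' {S K : Set V} {z y : V} (h : RIn G S z y) (hz : z ∈ K) (hy : y ∉ K) :
    ∃ p ∈ K, ∃ q ∈ S, G.Adj p q ∧ q ∉ K := by
  obtain ⟨m, hm⟩ := h.exists_rInN
  exact hm.exitEdge hz hy

/-- Hub connectivity. -/
theorem connOn_hub {T : Set V} {h : V} (hh : h ∈ T) (hhub : ∀ z ∈ T, RIn G T z h) :
    ConnOn G T :=
  ⟨⟨h, hh⟩, fun x hx y hy => (hhub x hx).trans (hhub y hy).symm⟩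


/-! ### Components -/

/-- The connected component of `z` within `S`. -/
def comp (G : SimpleGraph V) (S : Set V) (z : V) : Set V := {y | y ∈ S ∧ RIn G S z y}

theorem comp_subset {S : Set V} {z : V} : comp G S z ⊆ S := fun _ h => h.1

theorem mem_comp_self {S : Set V} {z : V} (hz : z ∈ S) : z ∈ comp G S z := ⟨hz, RIn.refl⟩

theorem comp_closed {S : Set V} {z : V} {p q : V} (hp : p ∈ comp G S z)
    (hq : q ∈ S) (hadj : G.Adj p q) : q ∈ comp G S z :=
  ⟨hq, hp.2.trans (RIn.single ⟨hp.1, hq, hadj⟩)⟩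

/-- Inside its component, everything is reachable from the basepoint. -/
theorem rIn_comp {S : Set V} {z y : V} (hz : z ∈ S) (h : RIn G S z y) :
    RIn G (comp G S z) z y := by
  induction h with
  | refl => exact RIn.refl
  | @tail b c hzb hbc ih =>
    have hbcomp : b ∈ comp G S z := ⟨hbc.1, hzb⟩
    have hccomp : c ∈ comp G S z := ⟨hbc.2.1, hzb.trans (RIn.single hbc)⟩
    exact ih.trans (RIn.single ⟨hbcomp, hccomp, hbc.2.2⟩)

theorem connOn_comp {S : Set V} {z : V} (hz : z ∈ S) : ConnOn G (comp G S z) := by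
  refine connOn_hub (mem_comp_self hz) ?_
  intro y hy
  exact (rIn_comp hz hy.2).symm

theorem comp_eq_of_mem {S : Set V} {z y : V} (hz : z ∈ S) (hy : y ∈ comp G S z) :
    comp G S y = comp G S z := by
  ext w
  constructor
  · rintro ⟨hw, hr⟩; exact ⟨hw, hy.2.trans hr⟩
  · rintro ⟨hw, hr⟩; exact ⟨hw, hy.2.symm.trans hr⟩

/-- The door of a component of `S \ {v}` inside a set `T` is `v`. -/
theorem comp_door' {S : Set V} {v z : V} {T : Set V} (hTS : T ⊆ insert v (S \ {v})) :
    ∀ p ∈ comp G (S \ {v}) z, ∀ q ∈ T, G.Adj p q → q ∉ comp G (S \ {v}) z → q = v := by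
  intro p hp q hq hadj hqn
  by_contra hqv
  rcases hTS hq with h | h
  · exact hqv h
  · exact hqn (comp_closed hp h hadj)

/-! ### Degrees -/

theorem dOn_mono {S T : Set V} [Finite V] (hST : S ⊆ T) (x : V) : dOn G S x ≤ dOn G T x :=
  Set.ncard_le_ncard (fun u hu => ⟨hST hu.1, hu.2⟩) (Set.toFinite _)

theorem dOn_diff_adj {S : Set V} [Finite V] {x u : V} (hu : u ∈ S) (hadj : G.Adj x u) :
    dOn G (S \ {u}) x = dOn G S x - 1 := by
  have hset : {w | w ∈ S \ {u} ∧ G.Adj x w} = {w | w ∈ S ∧ G.Adj x w} \ {u} := by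
    ext w
    simp only [Set.mem_setOf_eq, Set.mem_diff, Set.mem_singleton_iff]
    tauto
  show {w | w ∈ S \ {u} ∧ G.Adj x w}.ncard = {w | w ∈ S ∧ G.Adj x w}.ncard - 1
  have hmem : u ∈ {w | w ∈ S ∧ G.Adj x w} := ⟨hu, hadj⟩
  rw [hset, Set.ncard_diff_singleton_of_mem hmem]

theorem dOn_diff_nadj {S : Set V} {x u : V} (hadj : ¬ G.Adj x u) :
    dOn G (S \ {u}) x = dOn G S x := by
  have hset : {w | w ∈ S \ {u} ∧ G.Adj x w} = {w | w ∈ S ∧ G.Adj x w} := by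
    ext w
    simp only [Set.mem_setOf_eq, Set.mem_diff, Set.mem_singleton_iff]
    constructor
    · rintro ⟨⟨h1, _⟩, h2⟩; exact ⟨h1, h2⟩
    · rintro ⟨h1, h2⟩
      exact ⟨⟨h1, fun he => hadj (he ▸ h2)⟩, h2⟩
  rw [dOn, hset, dOn]

theorem dOn_pos {S : Set V} [Finite V] {x y : V} (h : RIn G S x y) (hxy : x ≠ y) :
    1 ≤ dOn G S x := by
  obtain ⟨z, hz⟩ := h.exists_adj hxy
  have hzmem : z ∈ {u | u ∈ S ∧ G.Adj x u} := ⟨hz.2.1, hz.2.2⟩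
  exact (Set.ncard_pos (Set.toFinite _)).mpr ⟨z, hzmem⟩

/-- extract three distinct neighbours -/
theorem exists_three_of_ncard {s : Set V} [Finite V] (h : 3 ≤ s.ncard) :
    ∃ a ∈ s, ∃ b ∈ s, ∃ c ∈ s, a ≠ b ∧ a ≠ c ∧ b ≠ c := by
  have h1 : s.Nonempty := by
    rw [← Set.ncard_pos (Set.toFinite _)]; omega
  obtain ⟨a, ha⟩ := h1
  have h2 : (s \ {a}).Nonempty := by
    rw [← Set.ncard_pos (Set.toFinite _), Set.ncard_diff_singleton_of_mem ha]
    omega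
  obtain ⟨b, hb⟩ := h2
  have h3 : ((s \ {a}) \ {b}).Nonempty := by
    rw [← Set.ncard_pos (Set.toFinite _), Set.ncard_diff_singleton_of_mem hb,
      Set.ncard_diff_singleton_of_mem ha]
    omega
  obtain ⟨c, hc⟩ := h3
  refine ⟨a, ha, b, hb.1, c, hc.1.1, ?_, ?_, ?_⟩
  · rintro rfl; exact hb.2 rfl
  · rintro rfl; exact hc.1.2 rfl
  · rintro rfl; exact hc.2 rfl

/-! ### Bridge to `induce` connectivity -/

theorem connOn_iff {S : Set V} : ConnOn G S ↔ (G.induce S).Connected := by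
  constructor
  · rintro ⟨⟨x₀, hx₀⟩, hconn⟩
    have key : ∀ x (hx : x ∈ S) y (hy : y ∈ S), (G.induce S).Reachable ⟨x, hx⟩ ⟨y, hy⟩ := by
      intro x hx y hy
      have h := hconn x hx y hy
      clear hconn
      induction h with
      | refl => exact Reachable.refl _
      | @tail b c hab hbc ih =>
        have hr : (G.induce S).Reachable ⟨x, hx⟩ ⟨b, hbc.1⟩ := ih hbc.1
        exact hr.trans (SimpleGraph.Adj.reachable (by exact hbc.2.2))
    have : Nonempty ↥S := ⟨⟨x₀, hx₀⟩⟩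
    exact ⟨fun a b => key a.1 a.2 b.1 b.2⟩
  · rintro ⟨hpre⟩
    have hne : Nonempty ↥S := by infer_instance
    obtain ⟨x₀⟩ := hne
    refine ⟨⟨x₀.1, x₀.2⟩, ?_⟩
    intro x hx y hy
    obtain ⟨w⟩ := hpre ⟨x, hx⟩ ⟨y, hy⟩
    clear hpre
    have : ∀ (a b : ↥S), (G.induce S).Walk a b → RIn G S a.1 b.1 := by
      intro a b p
      induction p with
      | nil => exact RIn.refl
      | @cons u v w h p ih =>
        exact (RIn.single ⟨u.2, v.2, h⟩).trans ih
    exact this _ _ w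

theorem connOn_univ_of_connected (h : G.Connected) : ConnOn G (Set.univ : Set V) := by
  rw [connOn_iff]
  exact (Iso.connected_iff (G.induceUnivIso)).mpr h


/-! ### Removable vertex and greedy colouring -/

theorem exists_ne_of_ne_singleton {S : Set V} {x₀ : V} (hx₀ : x₀ ∈ S) (hne : S ≠ {x₀}) :
    ∃ y ∈ S, y ≠ x₀ := by
  by_contra hc
  push_neg at hc
  apply hne
  ext w
  constructor
  · exact fun hw => hc w hw
  · rintro rfl; exact hx₀

theorem removable [Finite V] : ∀ (n : ℕ) (S : Set V), S.ncard = n → ConnOn G S →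
    ∀ x₀ ∈ S, S ≠ {x₀} → ∃ x₁ ∈ S, x₁ ≠ x₀ ∧ ConnOn G (S \ {x₁}) := by
  intro n
  induction n using Nat.strong_induction_on with
  | _ n IH =>
  intro S hcard hconn x₀ hx₀ hne
  obtain ⟨y, hy, hyx₀⟩ := exists_ne_of_ne_singleton hx₀ hne
  by_cases hconn' : ConnOn G (S \ {y})
  · exact ⟨y, hy, hyx₀, hconn'⟩
  have hx₀' : x₀ ∈ S \ {y} := ⟨hx₀, fun h => hyx₀ (Set.mem_singleton_iff.mp h).symm⟩
  have hzex : ∃ z ∈ S \ {y}, ¬ RIn G (S \ {y}) x₀ z := by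
    by_contra hc
    push_neg at hc
    exact hconn' ⟨⟨x₀, hx₀'⟩, fun a ha b hb => (hc a ha).symm.trans (hc b hb)⟩
  obtain ⟨z, hz, hnr⟩ := hzex
  set K := comp G (S \ {y}) z with hKdef
  have hzK : z ∈ K := mem_comp_self hz
  have hx₀K : x₀ ∉ K := fun h => hnr h.2.symm
  have hdoor : ∀ p ∈ K, ∀ q ∈ S, G.Adj p q → q ∉ K → q = y :=
    comp_door' (G := G) (S := S) (v := y) (z := z)
      (fun w hw => by
        by_cases hwy : w = y
        · exact Or.inl hwy
        · exact Or.inr ⟨hw, hwy⟩)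
  have hKS : K ⊆ S \ {y} := comp_subset
  have hyK : y ∉ K := fun h => (hKS h).2 rfl
  have hS'conn : ConnOn G (K ∪ {y}) := by
    refine connOn_hub (h := y) (Or.inr rfl) ?_
    rintro w (hw | hw)
    · have hr : RIn G S w x₀ := hconn.2 w (hKS hw).1 x₀ hx₀
      have := hr.confine' hdoor hw hx₀K
      refine this.mono ?_
      rintro u (hu | hu)
      · exact Or.inl hu.1
      · exact Or.inr hu
    · rw [Set.mem_singleton_iff] at hw
      rw [hw]
      exact RIn.refl
  have hsub : K ∪ {y} ⊆ S := by
    rintro u (hu | hu)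
    · exact (hKS hu).1
    · rw [Set.mem_singleton_iff] at hu; rw [hu]; exact hy
  have hcard' : (K ∪ {y}).ncard < n := by
    rw [← hcard]
    refine Set.ncard_lt_ncard ⟨hsub, fun hss => ?_⟩ (Set.toFinite _)
    have := hss hx₀
    rcases this with h | h
    · exact hx₀K h
    · exact hyx₀ (Set.mem_singleton_iff.mp h).symm
  have hKne : K ∪ {y} ≠ {y} := by
    intro h
    have : z ∈ ({y} : Set V) := h ▸ (Or.inl hzK)
    exact hz.2 this
  obtain ⟨x₁, hx₁, hx₁y, hconn₁⟩ := IH _ hcard' _ rfl hS'conn y (Or.inr rfl) hKne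
  have hx₁K : x₁ ∈ K := by
    rcases hx₁ with h | h
    · exact h
    · exact absurd (Set.mem_singleton_iff.mp h) hx₁y
  refine ⟨x₁, (hKS hx₁K).1, fun h => hx₀K (h ▸ hx₁K), ?_⟩
  have hyS : y ∈ S \ {x₁} := ⟨hy, fun h => hyK ((Set.mem_singleton_iff.mp h) ▸ hx₁K)⟩
  refine connOn_hub (h := y) hyS ?_
  intro w hw
  by_cases hwK : w ∈ K
  · have hmem : w ∈ (K ∪ {y}) \ {x₁} := ⟨Or.inl hwK, hw.2⟩
    have hymem : y ∈ (K ∪ {y}) \ {x₁} := ⟨Or.inr rfl, hyS.2⟩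
    refine (hconn₁.2 w hmem y hymem).mono ?_
    intro u hu
    exact ⟨hsub hu.1, hu.2⟩
  · have hr : RIn G S w y := hconn.2 w hw.1 y hy
    refine (hr.avoid' hdoor hwK hyK).mono ?_
    intro u hu
    exact ⟨hu.1, fun h => hwK (by exact False.elim (hu.2 (by
      -- u ∈ S \ K, u ∈ {x₁} means u = x₁ ∈ K, contradiction
      exact (Set.mem_singleton_iff.mp h) ▸ hx₁K)))⟩

theorem greedy [Finite V] : ∀ (n : ℕ) (S : Set V), S.ncard = n → ConnOn G S →
    ∀ (L : V → Finset ℕ), (∀ x ∈ S, dOn G S x ≤ (L x).card) →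
    ∀ x₀ ∈ S, dOn G S x₀ < (L x₀).card →
    ∃ c : V → ℕ, (∀ x ∈ S, c x ∈ L x) ∧ ∀ x ∈ S, ∀ y ∈ S, G.Adj x y → c x ≠ c y := by
  intro n
  induction n using Nat.strong_induction_on with
  | _ n IH =>
  intro S hcard hconn L hL x₀ hx₀ hslack
  by_cases hsingle : S = {x₀}
  · obtain ⟨γ, hγ⟩ : (L x₀).Nonempty := Finset.card_pos.mp (by omega)
    refine ⟨fun _ => γ, ?_, ?_⟩
    · intro x hx
      rw [hsingle, Set.mem_singleton_iff] at hx
      rw [hx]; exact hγ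
    · intro x hx y hy hadj
      rw [hsingle, Set.mem_singleton_iff] at hx hy
      subst hx; subst hy; exact absurd hadj (G.loopless.irrefl _)
  obtain ⟨x₁, hx₁, hx₁x₀, hconn'⟩ := removable n S hcard hconn x₀ hx₀ hsingle
  have hd1 : 1 ≤ dOn G S x₁ := dOn_pos (hconn.2 x₁ hx₁ x₀ hx₀) hx₁x₀
  obtain ⟨γ, hγ⟩ : (L x₁).Nonempty := Finset.card_pos.mp (by have := hL x₁ hx₁; omega)
  set L' : V → Finset ℕ := fun x => if G.Adj x₁ x then (L x).erase γ else L x with hL'def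
  have hcard' : (S \ {x₁}).ncard < n := by
    rw [← hcard]
    refine Set.ncard_lt_ncard ⟨Set.diff_subset, fun hss => ?_⟩ (Set.toFinite _)
    exact (hss hx₁).2 rfl
  have hLd : ∀ x ∈ S \ {x₁}, dOn G (S \ {x₁}) x ≤ (L' x).card := by
    intro x hx
    by_cases ha : G.Adj x x₁
    · rw [dOn_diff_adj hx₁ ha]
      have h1 : (L' x) = (L x).erase γ := by rw [hL'def]; simp [ha.symm]
      rw [h1]
      have h2 := Finset.pred_card_le_card_erase (s := L x) (a := γ)
      have h3 := hL x hx.1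
      omega
    · rw [dOn_diff_nadj ha]
      have h1 : (L' x) = L x := by
        rw [hL'def]; simp only [if_neg (fun h => ha (G.adj_symm h))]
      rw [h1]
      exact hL x hx.1
  have hx₀' : x₀ ∈ S \ {x₁} := ⟨hx₀, fun h => hx₁x₀ (Set.mem_singleton_iff.mp h).symm⟩
  have hslack' : dOn G (S \ {x₁}) x₀ < (L' x₀).card := by
    by_cases ha : G.Adj x₀ x₁
    · rw [dOn_diff_adj hx₁ ha]
      have h1 : (L' x₀) = (L x₀).erase γ := by rw [hL'def]; simp [ha.symm]
      rw [h1]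
      have h2 := Finset.pred_card_le_card_erase (s := L x₀) (a := γ)
      have h3 : 1 ≤ dOn G S x₀ := dOn_pos (hconn.2 x₀ hx₀ x₁ hx₁) (Ne.symm hx₁x₀)
      omega
    · rw [dOn_diff_nadj ha]
      have h1 : (L' x₀) = L x₀ := by
        rw [hL'def]; simp only [if_neg (fun h => ha (G.adj_symm h))]
      rw [h1]
      have := dOn_mono (G := G) (Set.diff_subset (s := S) (t := {x₁})) x₀
      omega
  obtain ⟨c, hc1, hc2⟩ := IH _ hcard' _ rfl hconn' L' hLd x₀ hx₀' hslack'
  refine ⟨fun x => if x = x₁ then γ else c x, ?_, ?_⟩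
  · intro x hx
    by_cases hxx : x = x₁
    · simp only [if_pos hxx]; rw [hxx]; exact hγ
    · simp only [if_neg hxx]
      have hmem := hc1 x ⟨hx, fun h => hxx (Set.mem_singleton_iff.mp h)⟩
      by_cases ha : G.Adj x₁ x
      · rw [hL'def] at hmem; simp only [if_pos ha] at hmem
        exact Finset.mem_of_mem_erase hmem
      · rw [hL'def] at hmem; simp only [if_neg ha] at hmem
        exact hmem
  · intro x hx y hy hadj
    by_cases hxx : x = x₁ <;> by_cases hyy : y = x₁
    · subst hxx; subst hyy; exact absurd hadj (G.loopless.irrefl _)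
    · simp only [if_pos hxx, if_neg hyy]
      have hmem := hc1 y ⟨hy, fun h => hyy (Set.mem_singleton_iff.mp h)⟩
      rw [hL'def] at hmem
      simp only [if_pos (hxx ▸ hadj : G.Adj x₁ y)] at hmem
      exact fun h => (Finset.ne_of_mem_erase hmem) h.symm
    · simp only [if_neg hxx, if_pos hyy]
      have hmem := hc1 x ⟨hx, fun h => hxx (Set.mem_singleton_iff.mp h)⟩
      rw [hL'def] at hmem
      have hadj' : G.Adj x₁ x := (hyy ▸ hadj).symm
      simp only [if_pos hadj'] at hmem
      exact Finset.ne_of_mem_erase hmem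
    · simp only [if_neg hxx, if_neg hyy]
      exact hc2 x ⟨hx, fun h => hxx (Set.mem_singleton_iff.mp h)⟩
        y ⟨hy, fun h => hyy (Set.mem_singleton_iff.mp h)⟩ hadj


/-! ### Distance-two triples -/

theorem triple {S : Set V} :
    ∀ (m : ℕ) (p q : V), RInN (G := G) S m p q → p ∈ S → p ≠ q → ¬ G.Adj p q →
    ∃ a ∈ S, ∃ x ∈ S, ∃ b ∈ S, G.Adj x a ∧ G.Adj x b ∧ a ≠ b ∧ ¬ G.Adj a b := by
  intro m
  induction m using Nat.strong_induction_on with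
  | _ m IH =>
  intro p q h hp hpq hnadj
  rcases m with _ | m
  · exact absurd h hpq
  rcases m with _ | m
  · obtain ⟨z, hz, hzq⟩ := h
    rw [show z = q from hzq] at hz
    exact absurd hz.2.2 hnadj
  obtain ⟨z, hpz, w, hzw, hwq⟩ := h
  by_cases hadj : G.Adj p w
  · have hnew : RInN (G := G) S (m+1) p q := ⟨w, ⟨hp, hzw.2.1, hadj⟩, hwq⟩
    exact IH (m+1) (by omega) p q hnew hp hpq hnadj
  · by_cases hpw : p = w
    · exact IH m (by omega) p q (hpw ▸ hwq) hp hpq hnadj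
    · exact ⟨p, hp, z, hpz.2.1, w, hzw.2.1, hpz.2.2.symm, hzw.2.2, hpw, hadj⟩

/-! ### Minimal components are cut-free -/

theorem minimal_part [Finite V] {H : Set V} (hHconn : ConnOn G H) (R : Set V)
    (hex : ∃ v z, v ∈ H ∧ z ∈ H ∧ z ≠ v ∧ (comp G (H \ {v}) z) ∩ R = ∅ ∧
      ∃ y ∈ H, y ≠ v ∧ y ∉ comp G (H \ {v}) z) :
    ∃ v z, (v ∈ H ∧ z ∈ H ∧ z ≠ v ∧ (comp G (H \ {v}) z) ∩ R = ∅ ∧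
      ∃ y ∈ H, y ≠ v ∧ y ∉ comp G (H \ {v}) z) ∧
      ∀ w ∈ comp G (H \ {v}) z, ConnOn G (H \ {w}) := by
  classical
  set P : ℕ → Prop := fun n => ∃ v z, (v ∈ H ∧ z ∈ H ∧ z ≠ v ∧
      (comp G (H \ {v}) z) ∩ R = ∅ ∧ ∃ y ∈ H, y ≠ v ∧ y ∉ comp G (H \ {v}) z) ∧
      (comp G (H \ {v}) z).ncard = n with hPdef
  have hexn : ∃ n, P n := by
    obtain ⟨v, z, hc⟩ := hex
    exact ⟨_, v, z, hc, rfl⟩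
  obtain ⟨v, z, hc, hcard⟩ := Nat.find_spec hexn
  refine ⟨v, z, hc, ?_⟩
  obtain ⟨hvH, hzH, hzv, hR, y₀, hy₀H, hy₀v, hy₀K⟩ := hc
  set K := comp G (H \ {v}) z with hKdef
  intro w hw
  by_contra hnc
  have hwH : w ∈ H := (comp_subset hw).1
  have hvK : v ∉ K := fun h => (comp_subset h).2 rfl
  have hvw : v ≠ w := fun h => hvK (h ▸ hw)
  have hvHw : v ∈ H \ {w} := ⟨hvH, fun h => hvw (Set.mem_singleton_iff.mp h)⟩
  have hpair : ∃ y ∈ H \ {w}, ¬ RIn G (H \ {w}) y v := by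
    by_contra hcc
    push_neg at hcc
    exact hnc ⟨⟨v, hvHw⟩, fun c hc d hd => (hcc c hc).trans (hcc d hd).symm⟩
  obtain ⟨y, hy, hynr⟩ := hpair
  set C' := comp G (H \ {w}) y with hC'def
  have hvC' : v ∉ C' := fun h => hynr h.2
  have hyC' : y ∈ C' := mem_comp_self hy
  -- C' ⊆ K
  have hC'K : C' ⊆ K := by
    intro y' hy'
    by_contra hy'K
    have hy'H : y' ∈ H \ {w} := comp_subset hy'
    -- y' reaches v within H \ {w}
    have hrv : RIn G (H \ {w}) y' v := by
      by_cases hy'v : y' = v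
      · rw [hy'v]; exact RIn.refl
      · have hy'Hv : y' ∈ H \ {v} := ⟨hy'H.1, fun h => hy'v (Set.mem_singleton_iff.mp h)⟩
        set K' := comp G (H \ {v}) y' with hK'def
        have hKK' : ∀ u, u ∈ K' → u ∉ K := by
          intro u hu huK
          have h1 : comp G (H \ {v}) u = K' := comp_eq_of_mem hy'Hv hu
          have h2 : comp G (H \ {v}) u = K :=
            comp_eq_of_mem ⟨hzH, fun h => hzv (Set.mem_singleton_iff.mp h)⟩ huK
          have hK'K : K' = K := h1.symm.trans h2
          exact hy'K (hK'K ▸ mem_comp_self hy'Hv)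
        have hwK' : w ∉ K' := fun h => hKK' w h hw
        have hdoorK' : ∀ p ∈ K', ∀ q ∈ H, G.Adj p q → q ∉ K' → q = v :=
          comp_door' (fun u hu => by
            by_cases huv : u = v
            · exact Or.inl huv
            · exact Or.inr ⟨hu, huv⟩)
        have hr : RIn G H y' v := hHconn.2 y' hy'H.1 v hvH
        have hconf := hr.confine' hdoorK' (mem_comp_self hy'Hv) (fun h => (comp_subset h).2 rfl)
        refine hconf.mono ?_
        rintro u (hu | hu)
        · exact ⟨hu.2, fun h => hwK' ((Set.mem_singleton_iff.mp h) ▸ hu.1)⟩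
        · rw [Set.mem_singleton_iff.mp hu]; exact hvHw
    exact hynr (hy'.2.trans hrv)
  have hwC' : w ∉ C' := fun h => (comp_subset h).2 rfl
  have hC'lt : C'.ncard < (Nat.find hexn) := by
    rw [← hcard]
    refine Set.ncard_lt_ncard ⟨hC'K, fun hss => ?_⟩ (Set.toFinite _)
    exact hwC' (hss hw)
  have hyw : y ≠ w := fun h => hy.2 (Set.mem_singleton_iff.mpr h)
  have hC'R : C' ∩ R = ∅ := by
    apply Set.eq_empty_iff_forall_notMem.mpr
    intro u hu
    have hmem : u ∈ K ∩ R := ⟨hC'K hu.1, hu.2⟩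
    rw [hR] at hmem
    exact hmem
  exact Nat.find_min hexn hC'lt ⟨w, y, ⟨hwH, hy.1, hyw, hC'R, v, hvH, hvw, hvC'⟩, rfl⟩


/-! ### The a–x–b configuration in a 2-connected graph -/

theorem abc [Finite V] {S : Set V} (hconn : ConnOn G S)
    (hncv : ∀ v ∈ S, ConnOn G (S \ {v}))
    {p q : V} (hp : p ∈ S) (hq : q ∈ S) (hpq : p ≠ q) (hnadj : ¬ G.Adj p q)
    (hdeg : ∀ x ∈ S, 3 ≤ dOn G S x) :
    ∃ a ∈ S, ∃ b ∈ S, ∃ x ∈ S, a ≠ b ∧ ¬ G.Adj a b ∧ G.Adj x a ∧ G.Adj x b ∧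
      ConnOn G ((S \ {a}) \ {b}) := by
  classical
  by_cases hA : ∃ x ∈ S, ∃ v ∈ S \ {x}, ¬ ConnOn G ((S \ {x}) \ {v})
  case neg =>
    -- Case B : deleting any two vertices leaves the graph connected
    push_neg at hA
    obtain ⟨m, hm⟩ := (hconn.2 p hp q hq).exists_rInN
    obtain ⟨a, ha, x, hx, b, hb, hxa, hxb, hab, hnab⟩ := triple m p q hm hp hpq hnadj
    have hba : b ∈ S \ {a} := ⟨hb, fun h => hab (Set.mem_singleton_iff.mp h).symm⟩
    exact ⟨a, ha, b, hb, x, hx, hab, hnab, hxa, hxb, hA a ha b hba⟩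
  case pos =>
    obtain ⟨x, hx, v', hv', hnotconn⟩ := hA
    set H := S \ {x} with hHdef
    have hHconn : ConnOn G H := hncv x hx
    have hxH : x ∉ H := fun h => h.2 rfl
    -- three distinct neighbours of x
    obtain ⟨n₁, hn₁, n₂, hn₂, n₃, hn₃, h12, h13, h23⟩ :=
      exists_three_of_ncard (s := {u | u ∈ S ∧ G.Adj x u}) (hdeg x hx)
    -- a candidate pair for minimal_part with R = ∅
    have hpair : ∃ a ∈ H \ {v'}, ∃ b ∈ H \ {v'}, ¬ RIn G (H \ {v'}) a b := by
      by_contra hcc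
      push_neg at hcc
      apply hnotconn
      have hne : (H \ {v'}).Nonempty := by
        -- one of n₁ n₂ differs from v' and from x
        have hn₁x : n₁ ≠ x := fun h => (G.loopless.irrefl x) (h ▸ hn₁.2)
        have hn₂x : n₂ ≠ x := fun h => (G.loopless.irrefl x) (h ▸ hn₂.2)
        by_cases h1v : n₁ = v'
        · exact ⟨n₂, ⟨⟨hn₂.1, fun h => hn₂x (Set.mem_singleton_iff.mp h)⟩,
            fun h => h12 (h1v ▸ (Set.mem_singleton_iff.mp h) ▸ rfl)⟩⟩
        · exact ⟨n₁, ⟨⟨hn₁.1, fun h => hn₁x (Set.mem_singleton_iff.mp h)⟩,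
            fun h => h1v (Set.mem_singleton_iff.mp h)⟩⟩
      obtain ⟨e, he⟩ := hne
      exact ⟨⟨e, he⟩, fun c hc d hd => hcc c hc d hd⟩
    obtain ⟨a0, ha0, b0, hb0, hnr0⟩ := hpair
    have hex₁ : ∃ v z, v ∈ H ∧ z ∈ H ∧ z ≠ v ∧ (comp G (H \ {v}) z) ∩ (∅ : Set V) = ∅ ∧
        ∃ y ∈ H, y ≠ v ∧ y ∉ comp G (H \ {v}) z := by
      refine ⟨v', a0, ⟨hv', ha0.1, fun h => ha0.2 (Set.mem_singleton_iff.mpr h),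
        Set.inter_empty _, b0, hb0.1, fun h => hb0.2 (Set.mem_singleton_iff.mpr h), ?_⟩⟩
      exact fun h => hnr0 h.2
    obtain ⟨v₁, z₁, ⟨hv₁H, hz₁H, hz₁v₁, -, y₁, hy₁H, hy₁v₁, hy₁K⟩, hfree₁⟩ :=
      minimal_part hHconn ∅ hex₁
    set K₁ := comp G (H \ {v₁}) z₁ with hK₁def
    have hz₁K₁ : z₁ ∈ K₁ :=
      mem_comp_self ⟨hz₁H, fun h => hz₁v₁ (Set.mem_singleton_iff.mp h)⟩
    have hv₁K₁ : v₁ ∉ K₁ := fun h => (comp_subset h).2 rfl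
    have hK₁H : K₁ ⊆ H := fun u hu => (comp_subset hu).1
    -- second minimal part avoiding K₁ ∪ {v₁}
    have hex₂ : ∃ v z, v ∈ H ∧ z ∈ H ∧ z ≠ v ∧ (comp G (H \ {v}) z) ∩ (K₁ ∪ {v₁}) = ∅ ∧
        ∃ y ∈ H, y ≠ v ∧ y ∉ comp G (H \ {v}) z := by
      refine ⟨v₁, y₁, hv₁H, hy₁H, hy₁v₁, ?_, z₁, hz₁H, hz₁v₁, ?_⟩
      · apply Set.eq_empty_iff_forall_notMem.mpr
        rintro u ⟨hu1, hu2 | hu2⟩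
        · -- u in both comps : comps equal, contradiction with y₁ ∉ K₁
          have e1 : comp G (H \ {v₁}) u = comp G (H \ {v₁}) y₁ :=
            comp_eq_of_mem ⟨hy₁H, fun h => hy₁v₁ (Set.mem_singleton_iff.mp h)⟩ hu1
          have e2 : comp G (H \ {v₁}) u = K₁ :=
            comp_eq_of_mem ⟨hz₁H, fun h => hz₁v₁ (Set.mem_singleton_iff.mp h)⟩ hu2
          have : y₁ ∈ K₁ := by
            rw [← e2, e1]
            exact mem_comp_self ⟨hy₁H, fun h => hy₁v₁ (Set.mem_singleton_iff.mp h)⟩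
          exact hy₁K this
        · exact (comp_subset hu1).2 hu2
      · -- z₁ ∉ comp of y₁
        intro hz₁c
        have e1 : comp G (H \ {v₁}) z₁ = comp G (H \ {v₁}) y₁ :=
          comp_eq_of_mem ⟨hy₁H, fun h => hy₁v₁ (Set.mem_singleton_iff.mp h)⟩ hz₁c
        apply hy₁K
        rw [hK₁def, e1]
        exact mem_comp_self ⟨hy₁H, fun h => hy₁v₁ (Set.mem_singleton_iff.mp h)⟩
    obtain ⟨v₂, z₂, ⟨hv₂H, hz₂H, hz₂v₂, hK₂R, y₂, hy₂H, hy₂v₂, hy₂K⟩, hfree₂⟩ :=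
      minimal_part hHconn (K₁ ∪ {v₁}) hex₂
    set K₂ := comp G (H \ {v₂}) z₂ with hK₂def
    have hz₂K₂ : z₂ ∈ K₂ :=
      mem_comp_self ⟨hz₂H, fun h => hz₂v₂ (Set.mem_singleton_iff.mp h)⟩
    have hv₂K₂ : v₂ ∉ K₂ := fun h => (comp_subset h).2 rfl
    have hK₂H : K₂ ⊆ H := fun u hu => (comp_subset hu).1
    have hK₂K₁ : ∀ u ∈ K₂, u ∉ K₁ := by
      intro u hu huK₁
      have : u ∈ K₂ ∩ (K₁ ∪ {v₁}) := ⟨hu, Or.inl huK₁⟩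
      rw [hK₂R] at this
      exact this
    have hv₁K₂ : v₁ ∉ K₂ := by
      intro h
      have : v₁ ∈ K₂ ∩ (K₁ ∪ {v₁}) := ⟨h, Or.inr rfl⟩
      rw [hK₂R] at this
      exact this
    -- v₂ is a cutter of H, hence not in the cut-free K₁
    have hv₂cut : ¬ ConnOn G (H \ {v₂}) := by
      intro hcc
      apply hy₂K
      have hz₂' : z₂ ∈ H \ {v₂} := ⟨hz₂H, fun h => hz₂v₂ (Set.mem_singleton_iff.mp h)⟩
      have hy₂' : y₂ ∈ H \ {v₂} := ⟨hy₂H, fun h => hy₂v₂ (Set.mem_singleton_iff.mp h)⟩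
      exact ⟨hy₂', hcc.2 z₂ hz₂' y₂ hy₂'⟩
    have hv₂K₁ : v₂ ∉ K₁ := fun h => hv₂cut (hfree₁ v₂ h)
    -- doors
    have hdoor₁ : ∀ p ∈ K₁, ∀ q ∈ H, G.Adj p q → q ∉ K₁ → q = v₁ :=
      comp_door' (fun u hu => by
        by_cases huv : u = v₁
        · exact Or.inl huv
        · exact Or.inr ⟨hu, huv⟩)
    have hdoor₂ : ∀ p ∈ K₂, ∀ q ∈ H, G.Adj p q → q ∉ K₂ → q = v₂ :=
      comp_door' (fun u hu => by
        by_cases huv : u = v₂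
        · exact Or.inl huv
        · exact Or.inr ⟨hu, huv⟩)
    -- x has a neighbour in K₁ and in K₂
    have hnbr : ∀ (v : V) (K : Set V), v ∈ H → K = comp G (H \ {v}) z₁ ∨ K = comp G (H \ {v}) z₂ →
        (∀ p ∈ K, ∀ q ∈ H, G.Adj p q → q ∉ K → q = v) → (∃ z0, z0 ∈ K) →
        ∃ a ∈ K, G.Adj x a := by
      intro v K hvH _ hdoorK ⟨z0, hz0⟩
      by_contra hno
      push_neg at hno
      have hvS : v ∈ S := hvH.1
      have hcS : ConnOn G (S \ {v}) := hncv v hvS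
      have hKH : K ⊆ H := by
        rintro u hu
        rcases ‹K = comp G (H \ {v}) z₁ ∨ K = comp G (H \ {v}) z₂› with h | h
        · exact (comp_subset (h ▸ hu)).1
        · exact (comp_subset (h ▸ hu)).1
      have hxv : x ≠ v := fun h => hxH (h ▸ hvH)
      have hz0S : z0 ∈ S \ {v} := by
        have := hKH hz0
        rcases ‹K = comp G (H \ {v}) z₁ ∨ K = comp G (H \ {v}) z₂› with h | h
        · exact ⟨(hKH hz0).1, (comp_subset (h ▸ hz0)).2⟩
        · exact ⟨(hKH hz0).1, (comp_subset (h ▸ hz0)).2⟩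
      have hxSv : x ∈ S \ {v} := ⟨hx, fun h => hxv (Set.mem_singleton_iff.mp h)⟩
      have hr : RIn G (S \ {v}) z0 x := hcS.2 z0 hz0S x hxSv
      have hxK : x ∉ K := fun h => hxH (hKH h)
      obtain ⟨p', hp', q', hq', hadj', hq'K⟩ := hr.exitEdge' hz0 hxK
      by_cases hq'x : q' = x
      · exact hno p' hp' (hq'x ▸ hadj'.symm)
      · have hq'H : q' ∈ H := ⟨hq'.1, fun h => hq'x (Set.mem_singleton_iff.mp h)⟩
        have := hdoorK p' hp' q' hq'H hadj' hq'K
        exact hq'.2 (Set.mem_singleton_iff.mpr this)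
    obtain ⟨a, haK₁, hxa⟩ := hnbr v₁ K₁ hv₁H (Or.inl rfl) hdoor₁ ⟨z₁, hz₁K₁⟩
    obtain ⟨b, hbK₂, hxb⟩ := hnbr v₂ K₂ hv₂H (Or.inr rfl) hdoor₂ ⟨z₂, hz₂K₂⟩
    have haH : a ∈ H := hK₁H haK₁
    have hbH : b ∈ H := hK₂H hbK₂
    have haS : a ∈ S := haH.1
    have hbS : b ∈ S := hbH.1
    have hab : a ≠ b := fun h => hK₂K₁ b hbK₂ (h ▸ haK₁)
    have hnab : ¬ G.Adj a b := by
      intro hadj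
      have hbv₁ : b ≠ v₁ := fun h => hv₁K₂ (h ▸ hbK₂)
      have hbH' : b ∈ H := hbH
      have := hdoor₁ a haK₁ b hbH' hadj (fun h => hK₂K₁ b hbK₂ h)
      exact hbv₁ this
    -- connectivity of (S \ {a}) \ {b}
    have hav₁ : a ≠ v₁ := fun h => hv₁K₁ (h ▸ haK₁)
    have hav₂ : a ≠ v₂ := fun h => hv₂K₁ (h ▸ haK₁)
    have hbv₁ : b ≠ v₁ := fun h => hv₁K₂ (h ▸ hbK₂)
    have hbv₂ : b ≠ v₂ := fun h => hv₂K₂ (h ▸ hbK₂)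
    have haK₂ : a ∉ K₂ := fun h => hK₂K₁ a h haK₁
    have hv₁T : v₁ ∈ (S \ {a}) \ {b} :=
      ⟨⟨hv₁H.1, fun h => hav₁ (Set.mem_singleton_iff.mp h).symm⟩,
        fun h => hbv₁ (Set.mem_singleton_iff.mp h).symm⟩
    have hconnHa : ConnOn G (H \ {a}) := hfree₁ a haK₁
    have hconnHb : ConnOn G (H \ {b}) := hfree₂ b hbK₂
    -- claim: everything in H \ {a,b} reaches v₁
    have claimH : ∀ z ∈ H, z ≠ a → z ≠ b → RIn G ((S \ {a}) \ {b}) z v₁ := by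
      intro z hzH hza hzb
      have hv₂a : v₂ ∈ H \ {a} := ⟨hv₂H, fun h => hav₂ (Set.mem_singleton_iff.mp h).symm⟩
      have hv₁a : v₁ ∈ H \ {a} := ⟨hv₁H, fun h => hav₁ (Set.mem_singleton_iff.mp h).symm⟩
      have hdoor₂a : ∀ p ∈ K₂, ∀ q ∈ H \ {a}, G.Adj p q → q ∉ K₂ → q = v₂ :=
        fun p hp q hq hadj hnK => hdoor₂ p hp q hq.1 hadj hnK
      have step2 : RIn G ((S \ {a}) \ {b}) v₂ v₁ := by
        have hr : RIn G (H \ {a}) v₂ v₁ := hconnHa.2 v₂ hv₂a v₁ hv₁a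
        have := hr.avoid' hdoor₂a hv₂K₂ hv₁K₂
        refine this.mono ?_
        rintro u ⟨⟨huH, hua⟩, huK₂⟩
        exact ⟨⟨huH.1, hua⟩, fun h => huK₂ ((Set.mem_singleton_iff.mp h) ▸ hbK₂)⟩
      by_cases hzK₂ : z ∈ K₂
      · -- go to v₂ inside K₂, then to v₁ avoiding K₂
        have hzb' : z ∈ H \ {b} := ⟨hzH, fun h => hzb (Set.mem_singleton_iff.mp h)⟩
        have hv₂b : v₂ ∈ H \ {b} := ⟨hv₂H, fun h => hbv₂ (Set.mem_singleton_iff.mp h).symm⟩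
        have hr : RIn G (H \ {b}) z v₂ := hconnHb.2 z hzb' v₂ hv₂b
        have hdoor₂b : ∀ p ∈ K₂, ∀ q ∈ H \ {b}, G.Adj p q → q ∉ K₂ → q = v₂ :=
          fun p hp q hq hadj hnK => hdoor₂ p hp q hq.1 hadj hnK
        have hconf := hr.confine' hdoor₂b hzK₂ hv₂K₂
        have step1 : RIn G ((S \ {a}) \ {b}) z v₂ := by
          refine hconf.mono ?_
          rintro u (⟨huK₂, huH, hub⟩ | hu)
          · exact ⟨⟨huH.1, fun h => haK₂ ((Set.mem_singleton_iff.mp h) ▸ huK₂)⟩, hub⟩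
          · rw [Set.mem_singleton_iff.mp hu]
            exact ⟨⟨hv₂H.1, fun h => hav₂ (Set.mem_singleton_iff.mp h).symm⟩,
              fun h => hbv₂ (Set.mem_singleton_iff.mp h).symm⟩
        exact step1.trans step2
      · -- avoid K₂ within H \ {a}
        have hza' : z ∈ H \ {a} := ⟨hzH, fun h => hza (Set.mem_singleton_iff.mp h)⟩
        have hr : RIn G (H \ {a}) z v₁ := hconnHa.2 z hza' v₁ hv₁a
        have := hr.avoid' hdoor₂a hzK₂ hv₁K₂
        refine this.mono ?_
        rintro u ⟨⟨huH, hua⟩, huK₂⟩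
        exact ⟨⟨huH.1, hua⟩, fun h => huK₂ ((Set.mem_singleton_iff.mp h) ▸ hbK₂)⟩
    refine ⟨a, haS, b, hbS, x, hx, hab, hnab, hxa, hxb, ?_⟩
    refine connOn_hub (h := v₁) hv₁T ?_
    intro w hw
    by_cases hwx : w = x
    · -- step to a third neighbour of x
      have hax : a ≠ x := fun h => hxH (h ▸ haH)
      have hbx : b ≠ x := fun h => hxH (h ▸ hbH)
      -- find a neighbour of x different from a and b
      have hy₀ : ∃ y₀, (y₀ ∈ S ∧ G.Adj x y₀) ∧ y₀ ≠ a ∧ y₀ ≠ b := by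
        by_cases h1a : n₁ = a
        · by_cases h2b : n₂ = b
          · exact ⟨n₃, hn₃, fun h => h13 (h1a.trans h.symm), fun h => h23 (h2b.trans h.symm)⟩
          · exact ⟨n₂, hn₂, fun h => h12 (h1a.trans h.symm), h2b⟩
        · by_cases h1b : n₁ = b
          · by_cases h2a : n₂ = a
            · exact ⟨n₃, hn₃, fun h => h23 (h2a.trans h.symm), fun h => h13 (h1b.trans h.symm)⟩
            · exact ⟨n₂, hn₂, h2a, fun h => h12 (h1b.trans h.symm)⟩
          · exact ⟨n₁, hn₁, h1a, h1b⟩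
      obtain ⟨y₀, hy₀S, hy₀a, hy₀b⟩ := hy₀
      have hy₀x : y₀ ≠ x := fun h => (G.loopless.irrefl x) (h ▸ hy₀S.2)
      have hy₀H : y₀ ∈ H := ⟨hy₀S.1, fun h => hy₀x (Set.mem_singleton_iff.mp h)⟩
      have hxT : x ∈ (S \ {a}) \ {b} :=
        ⟨⟨hx, fun h => hax (Set.mem_singleton_iff.mp h).symm⟩,
          fun h => hbx (Set.mem_singleton_iff.mp h).symm⟩
      have hy₀T : y₀ ∈ (S \ {a}) \ {b} :=
        ⟨⟨hy₀S.1, fun h => hy₀a (Set.mem_singleton_iff.mp h)⟩,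
          fun h => hy₀b (Set.mem_singleton_iff.mp h)⟩
      have hstep : RIn G ((S \ {a}) \ {b}) x y₀ := RIn.single ⟨hxT, hy₀T, hy₀S.2⟩
      rw [hwx]
      exact hstep.trans (claimH y₀ hy₀H hy₀a hy₀b)
    · have hwH : w ∈ H := ⟨hw.1.1, fun h => hwx (Set.mem_singleton_iff.mp h)⟩
      exact claimH w hwH (fun h => hw.1.2 (Set.mem_singleton_iff.mpr h))
        (fun h => hw.2 (Set.mem_singleton_iff.mpr h))


/-! ### Two-regular connected graphs are cycles -/

theorem set_eq_pair [Finite V] {s : Set V} {a b : V} (h2 : s.ncard = 2) (ha : a ∈ s) (hb : b ∈ s)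
    (hab : a ≠ b) : s = {a, b} := by
  have hsub : ({a, b} : Set V) ⊆ s := by
    rintro u (h | h)
    · rw [h]; exact ha
    · rw [h]; exact hb
  have hcard : s.ncard ≤ ({a, b} : Set V).ncard := by
    rw [Set.ncard_pair hab, h2]
  exact (Set.eq_of_subset_of_ncard_le hsub hcard (Set.toFinite _)).symm

theorem cycle_case [Finite V] {S : Set V} (hconn : ConnOn G S)
    (hreg : ∀ x ∈ S, dOn G S x = 2)
    (C : Finset ℕ) (hC : C.card = 2)
    (hnotodd : ¬ ∃ m : ℕ, Odd m ∧ Nonempty ((G.induce S) ≃g cycleGraph m)) :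
    ∃ c : V → ℕ, (∀ x ∈ S, c x ∈ C) ∧ ∀ x ∈ S, ∀ y ∈ S, G.Adj x y → c x ≠ c y := by
  classical
  set N : V → Set V := fun z => {u | u ∈ S ∧ G.Adj z u} with hNdef
  have hNcard : ∀ z ∈ S, (N z).ncard = 2 := fun z hz => hreg z hz
  obtain ⟨v₀, hv₀⟩ := hconn.1
  obtain ⟨u₁, u₂, hu12, hNv₀⟩ := Set.ncard_eq_two.mp (hNcard v₀ hv₀)
  have hu₁ : u₁ ∈ N v₀ := by rw [hNv₀]; exact Or.inl rfl
  set g : V → V → V := fun prev cur =>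
    if h : ∃ w, w ∈ N cur ∧ w ≠ prev then h.choose else cur with hgdef
  have hg : ∀ prev cur, cur ∈ S → prev ∈ N cur → g prev cur ∈ N cur ∧ g prev cur ≠ prev := by
    intro prev cur hcur hprev
    obtain ⟨a, b, hab, hN⟩ := Set.ncard_eq_two.mp (hNcard cur hcur)
    have hex : ∃ w, w ∈ N cur ∧ w ≠ prev := by
      rw [hN] at hprev
      rcases hprev with h | h
      · refine ⟨b, by rw [hN]; exact Or.inr rfl, ?_⟩
        rw [h]; exact fun hh => hab hh.symm
      · have h' : prev = b := h
        refine ⟨a, by rw [hN]; exact Or.inl rfl, ?_⟩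
        rw [h']; exact hab
    rw [hgdef]
    simp only [dif_pos hex]
    exact hex.choose_spec
  set F : ℕ → V × V := fun n => Nat.rec (v₀, u₁) (fun _ p => (p.2, g p.1 p.2)) n with hFdef
  set f : ℕ → V := fun n => (F n).1 with hfdef
  have hf0 : f 0 = v₀ := rfl
  have hf1 : f 1 = u₁ := rfl
  have hf2 : ∀ k, f (k + 2) = g (f k) (f (k + 1)) := fun k => rfl
  -- invariant
  have hinv : ∀ k, f k ∈ S ∧ f (k+1) ∈ S ∧ G.Adj (f k) (f (k+1)) := by
    intro k
    induction k with
    | zero =>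
      refine ⟨hv₀, hu₁.1, hu₁.2⟩
    | succ k ih =>
      obtain ⟨h1, h2, h3⟩ := ih
      have hprev : f k ∈ N (f (k+1)) := ⟨h1, h3.symm⟩
      have := hg (f k) (f (k+1)) h2 hprev
      rw [← hf2 k] at this
      exact ⟨h2, this.1.1, this.1.2⟩
  have hne2 : ∀ k, f (k+2) ≠ f k := by
    intro k
    obtain ⟨h1, h2, h3⟩ := hinv k
    have hprev : f k ∈ N (f (k+1)) := ⟨h1, h3.symm⟩
    have := hg (f k) (f (k+1)) h2 hprev
    rw [← hf2 k] at this
    exact this.2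
  have hNfull : ∀ k, N (f (k+1)) = {f k, f (k+2)} := by
    intro k
    obtain ⟨h1, h2, h3⟩ := hinv k
    obtain ⟨h1', h2', h3'⟩ := hinv (k+1)
    exact set_eq_pair (hNcard _ h2) ⟨h1, h3.symm⟩ ⟨h2', h3'⟩ (fun h => hne2 k h.symm)
  -- first collision
  have hexP : ∃ j, 0 < j ∧ ∃ i < j, f i = f j := by
    obtain ⟨i, j, hij, hfij⟩ := Finite.exists_ne_map_eq_of_infinite f
    rcases Nat.lt_or_ge i j with h | h
    · exact ⟨j, by omega, i, h, hfij⟩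
    · have : j < i := by omega
      exact ⟨i, by omega, j, this, hfij.symm⟩
  have hfind : ∃ n, (0 < n ∧ ∃ i < n, f i = f n) ∧
      ∀ m < n, ¬(0 < m ∧ ∃ i < m, f i = f m) :=
    ⟨Nat.find hexP, Nat.find_spec hexP, fun m hm => Nat.find_min hexP hm⟩
  obtain ⟨n, ⟨hnpos, i, hilt, hfi⟩, hmin⟩ := hfind
  have hinj : ∀ i' j', i' < j' → j' < n → f i' ≠ f j' := by
    intro i' j' hij hjn hcontra
    exact hmin j' hjn ⟨by omega, i', hij, hcontra⟩
  have hinj2 : ∀ i' j', i' < n → j' < n → f i' = f j' → i' = j' := by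
    intro i' j' hi hj he
    rcases Nat.lt_trichotomy i' j' with h | h | h
    · exact absurd he (hinj _ _ h hj)
    · exact h
    · exact absurd he.symm (hinj _ _ h hi)
  -- the collision is with 0
  have hi0 : i = 0 := by
    by_contra hi0
    have hi1 : 1 ≤ i := by omega
    have hin : i < n := hilt
    have hNi : N (f i) = {f (i-1), f (i+1)} := by
      have := hNfull (i-1)
      rwa [show i - 1 + 1 = i by omega, show i - 1 + 2 = i + 1 by omega] at this
    have hNn : N (f n) = {f (n-1), f (n+1)} := by
      have hh := hNfull (n-1)
      rwa [show n - 1 + 1 = n by omega, show n - 1 + 2 = n + 1 by omega] at hh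
    have hmem : f (n-1) ∈ N (f i) := by
      rw [hfi, hNn]; exact Or.inl rfl
    rw [hNi] at hmem
    rcases hmem with h | h
    · -- f (n-1) = f (i-1)
      have h1 : i - 1 < n - 1 := by omega
      have h2 : n - 1 < n := by omega
      exact hinj (i-1) (n-1) h1 h2 h.symm
    · -- f (n-1) = f (i+1)
      rcases Nat.lt_trichotomy (i+1) (n-1) with h' | h' | h'
      · exact hinj (i+1) (n-1) h' (by omega) h.symm
      · have hni2 : n = i + 2 := by omega
        rw [hni2] at hfi
        exact hne2 i hfi.symm
      · have hieq : i = n - 1 := by omega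
        have hA : G.Adj (f (n-1)) (f n) := by
          have hh := (hinv (n-1)).2.2
          rwa [show n - 1 + 1 = n by omega] at hh
        rw [← hfi, hieq] at hA
        exact G.loopless.irrefl _ hA
  rw [hi0] at hfi
  -- n ≥ 3
  have hn1 : n ≠ 1 := by
    intro h
    have hadj : G.Adj (f 0) (f 1) := (hinv 0).2.2
    rw [h] at hfi
    rw [← hfi] at hadj
    exact G.loopless.irrefl _ hadj
  have hn2 : n ≠ 2 := by
    intro h
    rw [h] at hfi
    exact hne2 0 hfi.symm
  have hn3 : 3 ≤ n := by omega
  -- neighbourhood of the basepoint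
  have hN0 : N (f 0) = {f 1, f (n-1)} := by
    have hAdj : G.Adj (f (n-1)) (f n) := by
      have hh := (hinv (n-1)).2.2
      rwa [show n - 1 + 1 = n by omega] at hh
    refine set_eq_pair (hNcard _ (hinv 0).1) ⟨(hinv 0).2.1, (hinv 0).2.2⟩
      ⟨(hinv (n-1)).1, ?_⟩ ?_
    · rw [hfi]; exact hAdj.symm
    · exact fun h => hinj 1 (n-1) (by omega) (by omega) h
  -- image set
  set I : Set V := {y | ∃ k, k < n ∧ f k = y} with hIdef
  have hIS : I ⊆ S := by
    rintro y ⟨k, _, rfl⟩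
    exact (hinv k).1
  have hclosed : ∀ p ∈ I, ∀ q, q ∈ S → G.Adj p q → q ∈ I := by
    rintro p ⟨k, hk, rfl⟩ q hq hadj
    have hqN : q ∈ N (f k) := ⟨hq, hadj⟩
    rcases Nat.eq_zero_or_pos k with rfl | hkpos
    · rw [hN0] at hqN
      rcases hqN with h | h
      · exact ⟨1, by omega, h.symm⟩
      · exact ⟨n-1, by omega, h.symm⟩
    · have hNk : N (f k) = {f (k-1), f (k+1)} := by
        have := hNfull (k-1)
        rwa [show k - 1 + 1 = k by omega, show k - 1 + 2 = k + 1 by omega] at this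
      rw [hNk] at hqN
      rcases hqN with h | h
      · exact ⟨k-1, by omega, h.symm⟩
      · rcases Nat.lt_trichotomy (k+1) n with h' | h' | h'
        · exact ⟨k+1, h', h.symm⟩
        · exact ⟨0, by omega, by rw [hfi, ← h']; exact h.symm⟩
        · omega
  have hSI : S ⊆ I := by
    intro y hy
    have hr : RIn G S v₀ y := hconn.2 v₀ hv₀ y hy
    clear hy
    induction hr with
    | refl => exact ⟨0, by omega, hf0⟩
    | @tail b c hb hbc ih =>
      exact hclosed b ih c hbc.2.1 hbc.2.2
  -- edge characterization
  have hedge : ∀ j k, j < n → k < n → G.Adj (f j) (f k) →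
      (j + 1 < n ∧ k = j + 1) ∨ (j + 1 = n ∧ k = 0) ∨
      (k + 1 < n ∧ j = k + 1) ∨ (k + 1 = n ∧ j = 0) := by
    intro j k hj hk hadj
    have hkN : f k ∈ N (f j) := ⟨(hinv k).1, hadj⟩
    rcases Nat.eq_zero_or_pos j with rfl | hjpos
    · rw [hN0] at hkN
      rcases hkN with h | h
      · have hk1 : k = 1 := hinj2 k 1 hk (by omega) h
        left; omega
      · have hk1 : k = n - 1 := hinj2 k (n-1) hk (by omega) h
        right; right; right; omega
    · have hNj : N (f j) = {f (j-1), f (j+1)} := by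
        have := hNfull (j-1)
        rwa [show j - 1 + 1 = j by omega, show j - 1 + 2 = j + 1 by omega] at this
      rw [hNj] at hkN
      rcases hkN with h | h
      · have : k = j - 1 := hinj2 k (j-1) hk (by omega) h
        right; right; left; omega
      · rcases Nat.lt_trichotomy (j+1) n with h' | h' | h'
        · have : k = j + 1 := hinj2 k (j+1) hk h' h
          left; omega
        · have : k = 0 := by
            apply hinj2 k 0 hk (by omega)
            rw [hfi, ← h']; exact h
          right; left; omega
        · omega
  have hedge' : ∀ j k, j < n → k < n →
      ((j + 1 < n ∧ k = j + 1) ∨ (j + 1 = n ∧ k = 0)) → G.Adj (f j) (f k) := by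
    intro j k hj hk he
    rcases he with ⟨h1, h2⟩ | ⟨h1, h2⟩
    · rw [h2]; exact (hinv j).2.2
    · rw [h2, hfi, ← h1]
      exact (hinv j).2.2
  -- colors
  obtain ⟨γ₁, γ₂, hγ12, hCpair⟩ := Finset.card_eq_two.mp hC
  rcases Nat.even_or_odd n with heven | hodd
  · -- even cycle : parity coloring
    have hnmod : n % 2 = 0 := Nat.even_iff.mp heven
    set c : V → ℕ := fun y => if ∃ k, k < n ∧ f k = y ∧ k % 2 = 0 then γ₁ else γ₂ with hcdef
    have hcf : ∀ k, k < n → c (f k) = if k % 2 = 0 then γ₁ else γ₂ := by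
      intro k hk
      by_cases he : k % 2 = 0
      · rw [hcdef]
        simp only [if_pos he]
        have hex2 : ∃ k', k' < n ∧ f k' = f k ∧ k' % 2 = 0 := ⟨k, hk, rfl, he⟩
        simp only [if_pos hex2]
      · rw [hcdef]
        simp only [if_neg he]
        have hnex : ¬ ∃ k', k' < n ∧ f k' = f k ∧ k' % 2 = 0 := by
          rintro ⟨k', hk', hfk', he'⟩
          exact he ((hinj2 k' k hk' hk hfk') ▸ he')
        simp only [if_neg hnex]
    refine ⟨c, ?_, ?_⟩
    · intro y hy
      rw [hcdef]
      by_cases h : ∃ k, k < n ∧ f k = y ∧ k % 2 = 0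
      · simp only [if_pos h]; rw [hCpair]; exact Finset.mem_insert_self _ _
      · simp only [if_neg h]; rw [hCpair]
        exact Finset.mem_insert_of_mem (Finset.mem_singleton_self _)
    · intro y hy z hz hadj
      obtain ⟨j, hj, rfl⟩ := hSI hy
      obtain ⟨k, hk, rfl⟩ := hSI hz
      have hcase := hedge j k hj hk hadj
      have hparity : j % 2 ≠ k % 2 := by omega
      rw [hcf j hj, hcf k hk]
      by_cases hje : j % 2 = 0
      · rw [if_pos hje, if_neg (by omega)]
        exact hγ12
      · rw [if_neg hje, if_pos (by omega)]
        exact hγ12.symm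
  · -- odd cycle : build the isomorphism and contradict the hypothesis
    exfalso
    apply hnotodd
    refine ⟨n, hodd, ?_⟩
    haveI : NeZero n := ⟨by omega⟩
    have hmem : ∀ k : Fin n, f k.val ∈ S := fun k => (hinv k.val).1
    set φ : Fin n → ↥S := fun k => ⟨f k.val, hmem k⟩ with hφdef
    have hbij : Function.Bijective φ := by
      constructor
      · intro a b hab
        have : f a.val = f b.val := congrArg Subtype.val hab
        exact Fin.ext (hinj2 a.val b.val a.isLt b.isLt this)
      · rintro ⟨y, hy⟩
        obtain ⟨k, hk, rfl⟩ := hSI hy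
        exact ⟨⟨k, hk⟩, rfl⟩
    have hval1 : (1 : Fin n).val = 1 := by
      rw [Fin.val_one']
      exact Nat.mod_eq_of_lt (by omega)
    have hsucc : ∀ i j : Fin n, ((i.val + 1 < n ∧ j.val = i.val + 1) ∨
        (i.val + 1 = n ∧ j.val = 0)) ↔ j = i + 1 := by
      intro i j
      constructor
      · rintro (⟨h1, h2⟩ | ⟨h1, h2⟩)
        · apply Fin.ext
          rw [Fin.val_add, hval1, h2, Nat.mod_eq_of_lt h1]
        · apply Fin.ext
          rw [Fin.val_add, hval1, h2, h1, Nat.mod_self]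
      · rintro rfl
        rw [Fin.val_add, hval1]
        rcases Nat.lt_trichotomy (i.val + 1) n with h' | h' | h'
        · left; exact ⟨h', Nat.mod_eq_of_lt h'⟩
        · right; exact ⟨h', by rw [h', Nat.mod_self]⟩
        · have := i.isLt; omega
    have hiff : ∀ i j : Fin n, (G.induce S).Adj (φ i) (φ j) ↔ (cycleGraph n).Adj i j := by
      intro i j
      rw [cycleGraph_adj']
      constructor
      · intro hadj
        have hadj' : G.Adj (f i.val) (f j.val) := hadj
        have hcase := hedge i.val j.val i.isLt j.isLt hadj'
        rcases hcase with h | h | h | h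
        · -- j = i + 1
          right
          have : j = i + 1 := (hsucc i j).mp (Or.inl h)
          rw [this, add_sub_cancel_left, hval1]
        · right
          have : j = i + 1 := (hsucc i j).mp (Or.inr h)
          rw [this, add_sub_cancel_left, hval1]
        · left
          have : i = j + 1 := (hsucc j i).mp (Or.inl h)
          rw [this, add_sub_cancel_left, hval1]
        · left
          have : i = j + 1 := (hsucc j i).mp (Or.inr h)
          rw [this, add_sub_cancel_left, hval1]
      · intro h
        rcases h with h | h
        · -- i - j = 1, so i = j + 1
          have hij : i = j + 1 := by
            have h' : i - j = 1 := Fin.ext (by rw [hval1]; exact h)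
            have := congrArg (· + j) h'
            simpa [sub_add_cancel, add_comm] using this
          have := (hsucc j i).mpr hij
          exact (hedge' j.val i.val j.isLt i.isLt this).symm
        · have hji : j = i + 1 := by
            have h' : j - i = 1 := Fin.ext (by rw [hval1]; exact h)
            have := congrArg (· + i) h'
            simpa [sub_add_cancel, add_comm] using this
          have := (hsucc i j).mpr hji
          exact hedge' i.val j.val i.isLt j.isLt this
    exact ⟨(RelIso.mk (Equiv.ofBijective φ hbij) (@fun i j => hiff i j) :
      cycleGraph n ≃g G.induce S).symm⟩



/-! ### The main theorem -/

theorem main [Finite V] : ∀ (n : ℕ) (S : Set V), S.ncard = n → ConnOn G S →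
    ∀ (L : V → Finset ℕ), (∀ x ∈ S, dOn G S x ≤ (L x).card) →
    ((∃ x ∈ S, dOn G S x < (L x).card) ∨
      (∃ B : Set V, B ⊆ S ∧ NoCutVertex G B ∧
        (∀ B' : Set V, B ⊆ B' → B' ⊆ S → NoCutVertex G B' → B = B') ∧
        ¬ (G.induce B = ⊤) ∧
        ¬ (∃ m : ℕ, Odd m ∧ Nonempty ((G.induce B) ≃g cycleGraph m)))) →
    ∃ c : V → ℕ, (∀ x ∈ S, c x ∈ L x) ∧ ∀ x ∈ S, ∀ y ∈ S, G.Adj x y → c x ≠ c y := by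
  classical
  intro n
  induction n using Nat.strong_induction_on with
  | _ n IH =>
  intro S hcard hconn L hL hcert
  rcases hcert with ⟨x₀, hx₀, hslack⟩ | ⟨B, hBS, hBncv, hBmax, hBncomp, hBnodd⟩
  · exact greedy n S hcard hconn L hL x₀ hx₀ hslack
  have hBconn : ConnOn G B := connOn_iff.mpr hBncv.1
  -- B contains two distinct non-adjacent vertices
  have hpq : ∃ p ∈ B, ∃ q ∈ B, p ≠ q ∧ ¬ G.Adj p q := by
    by_contra hcc
    push_neg at hcc
    apply hBncomp
    ext ⟨a, ha⟩ ⟨b, hb⟩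
    show G.Adj a b ↔ (⟨a, ha⟩ : ↥B) ≠ ⟨b, hb⟩
    constructor
    · intro hadj he
      have : a = b := congrArg Subtype.val he
      exact G.loopless.irrefl a (this ▸ hadj)
    · intro hne
      refine hcc a ha b hb ?_
      intro he
      exact hne (Subtype.ext he)
  obtain ⟨p, hpB, q, hqB, hpqne, hpqnadj⟩ := hpq
  by_cases hsl : ∃ x ∈ S, dOn G S x < (L x).card
  · obtain ⟨x₀, hx₀, hx⟩ := hsl
    exact greedy n S hcard hconn L hL x₀ hx₀ hx
  push_neg at hsl
  have htight : ∀ x ∈ S, dOn G S x = (L x).card := fun x hx => le_antisymm (hL x hx) (hsl x hx)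
  by_cases hcut : ∃ v ∈ S, ¬ ConnOn G (S \ {v})
  · -- cut-vertex case
    obtain ⟨v, hvS, hvcut⟩ := hcut
    have hBvne : (B \ {v}).Nonempty := by
      by_cases hpv : p = v
      · exact ⟨q, hqB, fun h => hpqne (hpv.trans (Set.mem_singleton_iff.mp h).symm)⟩
      · exact ⟨p, hpB, fun h => hpv (Set.mem_singleton_iff.mp h)⟩
    have hBvconn : ConnOn G (B \ {v}) := by
      by_cases hvB : v ∈ B
      · have hBne : B ≠ {v} := by
          intro h
          rw [h] at hpB hqB
          exact hpqne ((Set.mem_singleton_iff.mp hpB).trans (Set.mem_singleton_iff.mp hqB).symm)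
        exact connOn_iff.mpr (hBncv.2 v hvB hBne)
      · have he : B \ {v} = B := by
          ext u
          constructor
          · exact fun h => h.1
          · exact fun h => ⟨h, fun hh => hvB ((Set.mem_singleton_iff.mp hh) ▸ h)⟩
        rw [he]
        exact hBconn
    obtain ⟨z₀, hz₀⟩ := hBvne
    set C₀ := comp G (S \ {v}) z₀ with hC₀def
    have hz₀S : z₀ ∈ S \ {v} := ⟨hBS hz₀.1, hz₀.2⟩
    have hsubBv : B \ {v} ⊆ S \ {v} := fun u hu => ⟨hBS hu.1, hu.2⟩
    have hBC₀ : B \ {v} ⊆ C₀ := by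
      intro b hb
      refine ⟨⟨hBS hb.1, hb.2⟩, ?_⟩
      exact (hBvconn.2 z₀ hz₀ b hb).mono hsubBv
    have hC₀S : C₀ ⊆ S \ {v} := comp_subset
    have hvC₀ : v ∉ C₀ := fun h => (hC₀S h).2 rfl
    have hOne : ∃ w, w ∈ S \ {v} ∧ w ∉ C₀ := by
      by_contra hcc
      push_neg at hcc
      apply hvcut
      refine ⟨⟨z₀, hz₀S⟩, ?_⟩
      intro a ha b hb
      exact ((hcc a ha).2.symm.trans (hcc b hb).2)
    obtain ⟨w₀, hw₀S, hw₀C₀⟩ := hOne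
    have hdoorC : ∀ p' ∈ C₀, ∀ q' ∈ S, G.Adj p' q' → q' ∉ C₀ → q' = v :=
      comp_door' (fun u hu => by
        by_cases huv : u = v
        · exact Or.inl huv
        · exact Or.inr ⟨hu, huv⟩)
    -- colourings of the other components
    have hcompcol : ∀ K : Set V, ∃ c : V → ℕ,
        (∃ w, (w ∈ S \ {v} ∧ w ∉ C₀) ∧ K = comp G (S \ {v}) w) →
        ((∀ x ∈ K, c x ∈ L x) ∧ ∀ x ∈ K, ∀ y ∈ K, G.Adj x y → c x ≠ c y) := by
      intro K
      by_cases hex : ∃ w, (w ∈ S \ {v} ∧ w ∉ C₀) ∧ K = comp G (S \ {v}) w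
      · obtain ⟨w, ⟨hwS, hwC⟩, rfl⟩ := hex
        have hKconn : ConnOn G (comp G (S \ {v}) w) := connOn_comp hwS
        have hKsub : comp G (S \ {v}) w ⊆ S \ {v} := comp_subset
        have hvK : v ∉ comp G (S \ {v}) w := fun h => (hKsub h).2 rfl
        have hKv : ∃ p' ∈ comp G (S \ {v}) w, G.Adj p' v := by
          have hr : RIn G S w v := hconn.2 w hwS.1 v hvS
          obtain ⟨p', hp', q', hq', hadj', hq'K⟩ := hr.exitEdge' (mem_comp_self hwS) hvK
          by_cases hq'v : q' = v
          · exact ⟨p', hp', hq'v ▸ hadj'⟩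
          · exact absurd (comp_closed hp' ⟨hq', fun h => hq'v (Set.mem_singleton_iff.mp h)⟩
              hadj') hq'K
        obtain ⟨p', hp'K, hp'v⟩ := hKv
        have hcardK : (comp G (S \ {v}) w).ncard < n := by
          rw [← hcard]
          refine Set.ncard_lt_ncard ⟨fun u hu => (hKsub hu).1, fun hss => ?_⟩ (Set.toFinite _)
          exact hvK (hss hvS)
        have hdegK : ∀ x ∈ comp G (S \ {v}) w, dOn G (comp G (S \ {v}) w) x ≤ (L x).card :=
          fun x hx => le_trans (dOn_mono (fun u hu => (hKsub hu).1) x) (hL x (hKsub hx).1)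
        have hp'slack : dOn G (comp G (S \ {v}) w) p' < (L p').card := by
          have h1 : dOn G (comp G (S \ {v}) w) p' ≤ dOn G (S \ {v}) p' :=
            dOn_mono (fun u hu => hKsub hu) p'
          have h2 : dOn G (S \ {v}) p' = dOn G S p' - 1 := dOn_diff_adj hvS hp'v
          have h3 : 1 ≤ dOn G S p' :=
            (Set.ncard_pos (Set.toFinite _)).mpr ⟨v, ⟨hvS, hp'v⟩⟩
          have h4 := hL p' (hKsub hp'K).1
          omega
        obtain ⟨c, hc1, hc2⟩ := IH _ hcardK _ rfl hKconn L hdegK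
          (Or.inl ⟨p', hp'K, hp'slack⟩)
        exact ⟨c, fun _ => ⟨hc1, hc2⟩⟩
      · exact ⟨fun _ => 0, fun h => absurd h hex⟩
    choose colK hcolK using hcompcol
    set cO : V → ℕ := fun x => colK (comp G (S \ {v}) x) x with hcOdef
    have hcO1 : ∀ x, x ∈ S \ {v} → x ∉ C₀ → cO x ∈ L x := by
      intro x hxS hxC
      have := (hcolK (comp G (S \ {v}) x) ⟨x, ⟨hxS, hxC⟩, rfl⟩).1 x (mem_comp_self hxS)
      exact this
    have hcO2 : ∀ x y, x ∈ S \ {v} → x ∉ C₀ → y ∈ S \ {v} → y ∉ C₀ → G.Adj x y →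
        cO x ≠ cO y := by
      intro x y hxS hxC hyS hyC hadj
      have hyK : y ∈ comp G (S \ {v}) x := comp_closed (mem_comp_self hxS) hyS hadj
      have hce : comp G (S \ {v}) y = comp G (S \ {v}) x := comp_eq_of_mem hxS hyK
      have hprop := (hcolK (comp G (S \ {v}) x) ⟨x, ⟨hxS, hxC⟩, rfl⟩).2
      have := hprop x (mem_comp_self hxS) y hyK hadj
      rw [hcOdef]
      simpa [hce] using this
    -- the forbidden colours at v
    set NO : Set V := {u | (u ∈ S \ {v}) ∧ u ∉ C₀ ∧ G.Adj v u} with hNOdef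
    set Forb : Finset ℕ := Finset.image cO (Set.toFinite NO).toFinset with hForbdef
    set L₁ : V → Finset ℕ := fun x => if x = v then (L v) \ Forb else L x with hL₁def
    set G₁ : Set V := C₀ ∪ {v} with hG₁def
    have hG₁sub : G₁ ⊆ S := by
      rintro u (hu | hu)
      · exact (hC₀S hu).1
      · rw [Set.mem_singleton_iff.mp hu]; exact hvS
    have hG₁conn : ConnOn G G₁ := by
      refine connOn_hub (h := v) (Or.inr rfl) ?_
      rintro u (hu | hu)
      · have hr : RIn G S u v := hconn.2 u (hC₀S hu).1 v hvS
        have := hr.confine' hdoorC hu hvC₀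
        refine this.mono ?_
        rintro z (hz | hz)
        · exact Or.inl hz.1
        · exact Or.inr hz
      · rw [Set.mem_singleton_iff.mp hu]; exact RIn.refl
    have hG₁card : G₁.ncard < n := by
      rw [← hcard]
      refine Set.ncard_lt_ncard ⟨hG₁sub, fun hss => ?_⟩ (Set.toFinite _)
      rcases hss hw₀S.1 with h | h
      · exact hw₀C₀ h
      · exact hw₀S.2 h
    -- degree bookkeeping at v
    have hsplit : dOn G S v = dOn G G₁ v + NO.ncard := by
      have hA : {u | u ∈ G₁ ∧ G.Adj v u} = {u | u ∈ C₀ ∧ G.Adj v u} := by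
        ext u
        constructor
        · rintro ⟨hu | hu, hadj⟩
          · exact ⟨hu, hadj⟩
          · exact absurd ((Set.mem_singleton_iff.mp hu) ▸ hadj) (G.loopless.irrefl v)
        · rintro ⟨hu, hadj⟩
          exact ⟨Or.inl hu, hadj⟩
      have hU : {u | u ∈ S ∧ G.Adj v u} = {u | u ∈ C₀ ∧ G.Adj v u} ∪ NO := by
        ext u
        constructor
        · rintro ⟨huS, hadj⟩
          have huv : u ≠ v := fun h => G.loopless.irrefl v (h ▸ hadj)
          by_cases huC : u ∈ C₀
          · exact Or.inl ⟨huC, hadj⟩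
          · exact Or.inr ⟨⟨huS, fun h => huv (Set.mem_singleton_iff.mp h)⟩, huC, hadj⟩
        · rintro (⟨hu, hadj⟩ | ⟨hu1, _, hadj⟩)
          · exact ⟨(hC₀S hu).1, hadj⟩
          · exact ⟨hu1.1, hadj⟩
      have hdisj : Disjoint {u | u ∈ C₀ ∧ G.Adj v u} NO := by
        rw [Set.disjoint_left]
        rintro u ⟨hu, _⟩ ⟨_, huC, _⟩
        exact huC hu
      rw [dOn, dOn, hU, hA, Set.ncard_union_eq hdisj (Set.toFinite _) (Set.toFinite _)]
    have hForbcard : Forb.card ≤ NO.ncard := by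
      rw [hForbdef]
      calc (Finset.image cO (Set.toFinite NO).toFinset).card
          ≤ (Set.toFinite NO).toFinset.card := Finset.card_image_le
        _ = NO.ncard := by rw [Set.ncard_eq_toFinset_card NO (Set.toFinite NO)]
    have hdeg₁ : ∀ x ∈ G₁, dOn G G₁ x ≤ (L₁ x).card := by
      intro x hx
      by_cases hxv : x = v
      · subst hxv
        have h1 : (L₁ x) = (L x) \ Forb := by rw [hL₁def]; simp
        rw [h1]
        have h2 := Finset.le_card_sdiff Forb (L x)
        have h3 := hL x hvS
        omega
      · have h1 : (L₁ x) = L x := by rw [hL₁def]; simp [hxv]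
        rw [h1]
        have hxC₀ : x ∈ C₀ := by
          rcases hx with h | h
          · exact h
          · exact absurd (Set.mem_singleton_iff.mp h) hxv
        have hsets : {u | u ∈ G₁ ∧ G.Adj x u} = {u | u ∈ S ∧ G.Adj x u} := by
          ext u
          constructor
          · rintro ⟨hu, hadj⟩
            exact ⟨hG₁sub hu, hadj⟩
          · rintro ⟨huS, hadj⟩
            by_cases huv : u = v
            · exact ⟨Or.inr (Set.mem_singleton_iff.mpr huv), hadj⟩
            · exact ⟨Or.inl (comp_closed hxC₀ ⟨huS, fun h => huv (Set.mem_singleton_iff.mp h)⟩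
                hadj), hadj⟩
        have : dOn G G₁ x = dOn G S x := by rw [dOn, dOn, hsets]
        rw [this]
        exact hL x (hG₁sub hx)
    have hBG₁ : B ⊆ G₁ := by
      intro b hb
      by_cases hbv : b = v
      · exact Or.inr (Set.mem_singleton_iff.mpr hbv)
      · exact Or.inl (hBC₀ ⟨hb, fun h => hbv (Set.mem_singleton_iff.mp h)⟩)
    obtain ⟨c₁, hc₁1, hc₁2⟩ := IH _ hG₁card _ rfl hG₁conn L₁ hdeg₁
      (Or.inr ⟨B, hBG₁, hBncv,
        (fun B' h1 h2 h3 => hBmax B' h1 (h2.trans hG₁sub) h3), hBncomp, hBnodd⟩)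
    refine ⟨fun x => if x ∈ G₁ then c₁ x else cO x, ?_, ?_⟩
    · intro x hx
      by_cases hxG : x ∈ G₁
      · simp only [if_pos hxG]
        have := hc₁1 x hxG
        by_cases hxv : x = v
        · subst hxv
          rw [hL₁def] at this
          simp only [if_pos rfl] at this
          exact Finset.mem_sdiff.mp this |>.1
        · rw [hL₁def] at this
          simpa [hxv] using this
      · simp only [if_neg hxG]
        have hxSv : x ∈ S \ {v} :=
          ⟨hx, fun h => hxG (Or.inr h)⟩
        exact hcO1 x hxSv (fun h => hxG (Or.inl h))
    · intro x hx y hy hadj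
      by_cases hxG : x ∈ G₁ <;> by_cases hyG : y ∈ G₁
      · simp only [if_pos hxG, if_pos hyG]
        exact hc₁2 x hxG y hyG hadj
      · -- x ∈ G₁, y ∉ G₁
        simp only [if_pos hxG, if_neg hyG]
        have hySv : y ∈ S \ {v} := ⟨hy, fun h => hyG (Or.inr h)⟩
        have hyC : y ∉ C₀ := fun h => hyG (Or.inl h)
        rcases hxG with hxC | hxv
        · exact absurd (comp_closed hxC hySv hadj) hyC
        · -- x = v
          have hxv : x = v := Set.mem_singleton_iff.mp hxv
          subst hxv
          have hyNO : y ∈ NO := ⟨hySv, hyC, hadj⟩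
          have hmemF : cO y ∈ Forb := by
            rw [hForbdef]
            exact Finset.mem_image_of_mem cO ((Set.Finite.mem_toFinset _).mpr hyNO)
          have hc₁v := hc₁1 x (Or.inr rfl)
          rw [hL₁def] at hc₁v
          simp only [if_pos rfl] at hc₁v
          have := (Finset.mem_sdiff.mp hc₁v).2
          exact fun h => this (h ▸ hmemF)
      · -- x ∉ G₁, y ∈ G₁
        simp only [if_neg hxG, if_pos hyG]
        have hxSv : x ∈ S \ {v} := ⟨hx, fun h => hxG (Or.inr h)⟩
        have hxC : x ∉ C₀ := fun h => hxG (Or.inl h)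
        rcases hyG with hyC | hyv
        · exact absurd (comp_closed hyC hxSv hadj.symm) hxC
        · have hyv : y = v := Set.mem_singleton_iff.mp hyv
          subst hyv
          have hxNO : x ∈ NO := ⟨hxSv, hxC, hadj.symm⟩
          have hmemF : cO x ∈ Forb := by
            rw [hForbdef]
            exact Finset.mem_image_of_mem cO ((Set.Finite.mem_toFinset _).mpr hxNO)
          have hc₁v := hc₁1 y (Or.inr rfl)
          rw [hL₁def] at hc₁v
          simp only [if_pos rfl] at hc₁v
          have := (Finset.mem_sdiff.mp hc₁v).2
          exact fun h => this (h ▸ hmemF)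
      · simp only [if_neg hxG, if_neg hyG]
        exact hcO2 x y ⟨hx, fun h => hxG (Or.inr h)⟩ (fun h => hxG (Or.inl h))
          ⟨hy, fun h => hyG (Or.inr h)⟩ (fun h => hyG (Or.inl h)) hadj
  · -- no cut vertex : B = S
    push_neg at hcut
    have hSncv : NoCutVertex G S :=
      ⟨connOn_iff.mp hconn, fun v hv _ => connOn_iff.mp (hcut v hv)⟩
    have hBeqS : B = S := hBmax S hBS (subset_refl S) hSncv
    rw [hBeqS] at hBncomp hBnodd hpB hqB
    -- now p q ∈ S
    by_cases hdiff : ∃ u ∈ S, ∃ w ∈ S, G.Adj u w ∧ L u ≠ L w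
    · -- two adjacent vertices with different lists
      have solve : ∀ u w : V, u ∈ S → w ∈ S → G.Adj u w → (∃ α, α ∈ L u ∧ α ∉ L w) →
          ∃ c : V → ℕ, (∀ x ∈ S, c x ∈ L x) ∧ ∀ x ∈ S, ∀ y ∈ S, G.Adj x y → c x ≠ c y := by
        intro u w huS hwS huw hα
        obtain ⟨α, hαu, hαw⟩ := hα
        have hconn' : ConnOn G (S \ {u}) := hcut u huS
        set L' : V → Finset ℕ := fun x => if G.Adj u x then (L x).erase α else L x with hL'def
        have hwu : w ≠ u := fun h => G.loopless.irrefl u (h ▸ huw.symm)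
        have hwS' : w ∈ S \ {u} := ⟨hwS, fun h => hwu (Set.mem_singleton_iff.mp h)⟩
        have hLd : ∀ x ∈ S \ {u}, dOn G (S \ {u}) x ≤ (L' x).card := by
          intro x hx
          by_cases ha : G.Adj x u
          · rw [dOn_diff_adj huS ha]
            have h1 : (L' x) = (L x).erase α := by rw [hL'def]; simp [ha.symm]
            rw [h1]
            have h2 := Finset.pred_card_le_card_erase (s := L x) (a := α)
            have h3 := hL x hx.1
            omega
          · rw [dOn_diff_nadj ha]
            have h1 : (L' x) = L x := by
              rw [hL'def]; simp only [if_neg (fun h => ha (G.adj_symm h))]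
            rw [h1]
            exact hL x hx.1
        have hslackw : dOn G (S \ {u}) w < (L' w).card := by
          rw [dOn_diff_adj huS huw.symm]
          have h1 : (L' w) = (L w).erase α := by rw [hL'def]; simp [huw]
          rw [h1, Finset.erase_eq_of_notMem hαw]
          have h3 : 1 ≤ dOn G S w :=
            (Set.ncard_pos (Set.toFinite _)).mpr ⟨u, ⟨huS, huw.symm⟩⟩
          have h4 := htight w hwS
          omega
        obtain ⟨c, hc1, hc2⟩ := greedy (S \ {u}).ncard (S \ {u}) rfl hconn' L' hLd
          w hwS' hslackw
        refine ⟨fun x => if x = u then α else c x, ?_, ?_⟩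
        · intro x hx
          by_cases hxu : x = u
          · simp only [if_pos hxu]; rw [hxu]; exact hαu
          · simp only [if_neg hxu]
            have hmem := hc1 x ⟨hx, fun h => hxu (Set.mem_singleton_iff.mp h)⟩
            by_cases ha : G.Adj u x
            · rw [hL'def] at hmem
              simp only [if_pos ha] at hmem
              exact Finset.mem_of_mem_erase hmem
            · rw [hL'def] at hmem
              simp only [if_neg ha] at hmem
              exact hmem
        · intro x hx y hy hadj
          by_cases hxu : x = u <;> by_cases hyu : y = u
          · subst hxu; subst hyu; exact absurd hadj (G.loopless.irrefl _)
          · simp only [if_pos hxu, if_neg hyu]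
            have hmem := hc1 y ⟨hy, fun h => hyu (Set.mem_singleton_iff.mp h)⟩
            rw [hL'def] at hmem
            simp only [if_pos (hxu ▸ hadj : G.Adj u y)] at hmem
            exact fun h => (Finset.ne_of_mem_erase hmem) h.symm
          · simp only [if_neg hxu, if_pos hyu]
            have hmem := hc1 x ⟨hx, fun h => hxu (Set.mem_singleton_iff.mp h)⟩
            rw [hL'def] at hmem
            have hadj' : G.Adj u x := (hyu ▸ hadj).symm
            simp only [if_pos hadj'] at hmem
            exact Finset.ne_of_mem_erase hmem
          · simp only [if_neg hxu, if_neg hyu]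
            exact hc2 x ⟨hx, fun h => hxu (Set.mem_singleton_iff.mp h)⟩
              y ⟨hy, fun h => hyu (Set.mem_singleton_iff.mp h)⟩ hadj
      obtain ⟨u, huS, w, hwS, huw, hLuw⟩ := hdiff
      by_cases hα : ∃ α, α ∈ L u ∧ α ∉ L w
      · exact solve u w huS hwS huw hα
      · push_neg at hα
        have hsub : L u ⊆ L w := fun a ha => hα a ha
        have hss : L u ⊂ L w := lt_of_le_of_ne hsub hLuw
        obtain ⟨β, hβw, hβu⟩ := Finset.exists_of_ssubset hss
        exact solve w u hwS huS huw.symm ⟨β, hβw, hβu⟩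
    · -- all lists equal
      push_neg at hdiff
      have hall : ∀ x ∈ S, ∀ y ∈ S, L x = L y := by
        intro x hx y hy
        have hr := hconn.2 x hx y hy
        clear hy
        induction hr with
        | refl => rfl
        | @tail b c hxb hbc ih =>
          exact ih.trans (hdiff b hbc.1 c hbc.2.1 hbc.2.2)
      set C : Finset ℕ := L p with hCdef
      have hpS : p ∈ S := hpB
      have hqS : q ∈ S := hqB
      have hreg : ∀ x ∈ S, dOn G S x = C.card := by
        intro x hx
        rw [htight x hx, hCdef, hall x hx p hpS]
      have hd1 : 1 ≤ C.card := by
        have := dOn_pos (hconn.2 p hpS q hqS) hpqne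
        rw [hreg p hpS] at this
        exact this
      by_cases hd2 : C.card = 1
      · -- impossible : degree-1 vertex in a 2-connected-ish graph
        exfalso
        obtain ⟨z, hz⟩ := (hconn.2 p hpS q hqS).exists_adj hpqne
        have hzS : z ∈ S := hz.2.1
        have hzq : q ≠ z := fun h => hpqnadj (h ▸ hz.2.2)
        have hconn' := hcut z hzS
        have hpz : p ≠ z := fun h => G.loopless.irrefl z (h ▸ hz.2.2)
        have hpS' : p ∈ S \ {z} := ⟨hpS, fun h => hpz (Set.mem_singleton_iff.mp h)⟩
        have hqS' : q ∈ S \ {z} := ⟨hqS, fun h => hzq (Set.mem_singleton_iff.mp h)⟩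
        have h1 := dOn_pos (hconn'.2 p hpS' q hqS') hpqne
        have h2 : dOn G (S \ {z}) p = dOn G S p - 1 := dOn_diff_adj hzS hz.2.2
        have h3 := hreg p hpS
        omega
      by_cases hd2' : C.card = 2
      · -- even cycle case
        have hreg2 : ∀ x ∈ S, dOn G S x = 2 := fun x hx => (hreg x hx).trans hd2'
        obtain ⟨c, hc1, hc2⟩ := cycle_case hconn hreg2 C hd2' hBnodd
        refine ⟨c, ?_, hc2⟩
        intro x hx
        rw [hall x hx p hpS]
        exact hc1 x hx
      · -- Brooks case : degree at least 3
        have hd3 : 3 ≤ C.card := by omega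
        have hdeg3 : ∀ x ∈ S, 3 ≤ dOn G S x := fun x hx => (hreg x hx).symm ▸ hd3
        obtain ⟨a, haS, b, hbS, x, hxS, hab, hnab, hxa, hxb, hTconn⟩ :=
          abc hconn hcut hpS hqS hpqne hpqnadj hdeg3
        obtain ⟨γ, hγ⟩ : C.Nonempty := Finset.card_pos.mp (by omega)
        set T : Set V := (S \ {a}) \ {b} with hTdef
        set ℓ : V → Finset ℕ := fun y => if G.Adj a y ∨ G.Adj b y then (L y).erase γ
          else L y with hℓdef
        have hbSa : b ∈ S \ {a} := ⟨hbS, fun h => hab (Set.mem_singleton_iff.mp h).symm⟩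
        have hTsub : T ⊆ S := fun u hu => hu.1.1
        have hdT : ∀ y ∈ T, dOn G T y ≤ (ℓ y).card := by
          intro y hy
          have hyS := hTsub hy
          have hLy := hreg y hyS
          have hLcard : (L y).card = C.card := by rw [hall y hyS p hpS, hCdef]
          by_cases hya : G.Adj y a <;> by_cases hyb : G.Adj y b
          · have e1 : dOn G (S \ {a}) y = dOn G S y - 1 := dOn_diff_adj haS hya
            have e2 : dOn G T y = dOn G (S \ {a}) y - 1 := dOn_diff_adj hbSa hyb
            have e3 : (ℓ y) = (L y).erase γ := by
              rw [hℓdef]; simp [hya.symm]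
            rw [e2, e1, e3]
            have h2 := Finset.pred_card_le_card_erase (s := L y) (a := γ)
            omega
          · have e1 : dOn G (S \ {a}) y = dOn G S y - 1 := dOn_diff_adj haS hya
            have e2 : dOn G T y = dOn G (S \ {a}) y := dOn_diff_nadj hyb
            have e3 : (ℓ y) = (L y).erase γ := by
              rw [hℓdef]; simp [hya.symm]
            rw [e2, e1, e3]
            have h2 := Finset.pred_card_le_card_erase (s := L y) (a := γ)
            omega
          · have e1 : dOn G (S \ {a}) y = dOn G S y := dOn_diff_nadj hya
            have e2 : dOn G T y = dOn G (S \ {a}) y - 1 := dOn_diff_adj hbSa hyb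
            have e3 : (ℓ y) = (L y).erase γ := by
              rw [hℓdef]; simp [hyb.symm]
            rw [e2, e1, e3]
            have h2 := Finset.pred_card_le_card_erase (s := L y) (a := γ)
            omega
          · have e1 : dOn G (S \ {a}) y = dOn G S y := dOn_diff_nadj hya
            have e2 : dOn G T y = dOn G (S \ {a}) y := dOn_diff_nadj hyb
            have hcond : ¬ (G.Adj a y ∨ G.Adj b y) := by
              rintro (h | h)
              · exact hya h.symm
              · exact hyb h.symm
            have e3 : (ℓ y) = L y := by rw [hℓdef]; simp only [if_neg hcond]
            rw [e2, e1, e3]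
            omega
        have hxa' : x ≠ a := fun h => G.loopless.irrefl a (h ▸ hxa)
        have hxb' : x ≠ b := fun h => G.loopless.irrefl b (h ▸ hxb)
        have hxT : x ∈ T := ⟨⟨hxS, fun h => hxa' (Set.mem_singleton_iff.mp h)⟩,
          fun h => hxb' (Set.mem_singleton_iff.mp h)⟩
        have hslackx : dOn G T x < (ℓ x).card := by
          have e1 : dOn G (S \ {a}) x = dOn G S x - 1 := dOn_diff_adj haS hxa
          have e2 : dOn G T x = dOn G (S \ {a}) x - 1 := dOn_diff_adj hbSa hxb
          have e3 : (ℓ x) = (L x).erase γ := by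
            rw [hℓdef]; simp only [if_pos (Or.inl hxa.symm : G.Adj a x ∨ G.Adj b x)]
          have hLcard : (L x).card = C.card := by rw [hall x hxS p hpS, hCdef]
          have hdx := hreg x hxS
          rw [e2, e1, e3]
          have h2 := Finset.pred_card_le_card_erase (s := L x) (a := γ)
          have h5 : γ ∈ L x := by rw [hall x hxS p hpS]; exact hγ
          have h6 : ((L x).erase γ).card = (L x).card - 1 := Finset.card_erase_of_mem h5
          omega
        obtain ⟨c, hc1, hc2⟩ := greedy T.ncard T rfl hTconn ℓ hdT x hxT hslackx
        refine ⟨fun y => if y = a ∨ y = b then γ else c y, ?_, ?_⟩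
        · intro y hy
          by_cases hyab : y = a ∨ y = b
          · simp only [if_pos hyab]
            rcases hyab with h | h <;> rw [h, hall _ (by rwa [← h]) p hpS] <;> exact hγ
          · simp only [if_neg hyab]
            push_neg at hyab
            have hyT : y ∈ T := ⟨⟨hy, fun h => hyab.1 (Set.mem_singleton_iff.mp h)⟩,
              fun h => hyab.2 (Set.mem_singleton_iff.mp h)⟩
            have hmem := hc1 y hyT
            rw [hℓdef] at hmem
            by_cases ha : G.Adj a y ∨ G.Adj b y
            · simp only [if_pos ha] at hmem
              exact Finset.mem_of_mem_erase hmem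
            · simp only [if_neg ha] at hmem
              exact hmem
        · intro y hy z hz hadj
          by_cases hyab : y = a ∨ y = b <;> by_cases hzab : z = a ∨ z = b
          · exfalso
            rcases hyab with h1 | h1 <;> rcases hzab with h2 | h2
            · rw [h1, h2] at hadj; exact G.loopless.irrefl a hadj
            · rw [h1, h2] at hadj; exact hnab hadj
            · rw [h1, h2] at hadj; exact hnab hadj.symm
            · rw [h1, h2] at hadj; exact G.loopless.irrefl b hadj
          · simp only [if_pos hyab, if_neg hzab]
            push_neg at hzab
            have hzT : z ∈ T := ⟨⟨hz, fun h => hzab.1 (Set.mem_singleton_iff.mp h)⟩,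
              fun h => hzab.2 (Set.mem_singleton_iff.mp h)⟩
            have hmem := hc1 z hzT
            rw [hℓdef] at hmem
            have hadjz : G.Adj a z ∨ G.Adj b z := by
              rcases hyab with h | h
              · exact Or.inl (h ▸ hadj)
              · exact Or.inr (h ▸ hadj)
            simp only [if_pos hadjz] at hmem
            exact fun h => (Finset.ne_of_mem_erase hmem) h.symm
          · simp only [if_neg hyab, if_pos hzab]
            push_neg at hyab
            have hyT : y ∈ T := ⟨⟨hy, fun h => hyab.1 (Set.mem_singleton_iff.mp h)⟩,
              fun h => hyab.2 (Set.mem_singleton_iff.mp h)⟩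
            have hmem := hc1 y hyT
            rw [hℓdef] at hmem
            have hadjy : G.Adj a y ∨ G.Adj b y := by
              rcases hzab with h | h
              · exact Or.inl (h ▸ hadj).symm
              · exact Or.inr (h ▸ hadj).symm
            simp only [if_pos hadjy] at hmem
            exact Finset.ne_of_mem_erase hmem
          · simp only [if_neg hyab, if_neg hzab]
            push_neg at hyab
            push_neg at hzab
            exact hc2 y ⟨⟨hy, fun h => hyab.1 (Set.mem_singleton_iff.mp h)⟩,
                fun h => hyab.2 (Set.mem_singleton_iff.mp h)⟩
              z ⟨⟨hz, fun h => hzab.1 (Set.mem_singleton_iff.mp h)⟩,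
                fun h => hzab.2 (Set.mem_singleton_iff.mp h)⟩ hadj

end ERT


/-- Erdős–Rubin–Taylor / Borodin: degree-choosability. -/
theorem stmt14 [Fintype V] (G : SimpleGraph V) (hconn : G.Connected)
    (L : V → Finset ℕ) (hL : ∀ v, deg G v ≤ (L v).card)
    (h : (∃ v, deg G v < (L v).card) ∨
      ∃ B : Set V, IsBlock G B ∧
        ¬ (G.induce B = ⊤) ∧
        ¬ (∃ n : ℕ, Odd n ∧ Nonempty ((G.induce B) ≃g cycleGraph n))) :
    ∃ c : V → ℕ, (∀ v, c v ∈ L v) ∧ ∀ u v, G.Adj u v → c u ≠ c v := by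
  classical
  have hdeg : ∀ v, deg G v = ERT.dOn G Set.univ v := by
    intro v
    show Nat.card {u : V | G.Adj v u} = {u | u ∈ Set.univ ∧ G.Adj v u}.ncard
    rw [Nat.card_coe_set_eq]
    congr 1
    ext u
    simp
  have hconn' := ERT.connOn_univ_of_connected hconn
  have hcert : (∃ x ∈ Set.univ, ERT.dOn G Set.univ x < (L x).card) ∨
      (∃ B : Set V, B ⊆ Set.univ ∧ NoCutVertex G B ∧
        (∀ B' : Set V, B ⊆ B' → B' ⊆ Set.univ → NoCutVertex G B' → B = B') ∧
        ¬ (G.induce B = ⊤) ∧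
        ¬ (∃ m : ℕ, Odd m ∧ Nonempty ((G.induce B) ≃g cycleGraph m))) := by
    rcases h with ⟨v, hv⟩ | ⟨B, hBlock, hBc, hBo⟩
    · left
      exact ⟨v, Set.mem_univ v, by rw [← hdeg]; exact hv⟩
    · right
      exact ⟨B, Set.subset_univ B, hBlock.1,
        (fun B' h1 _ h3 => hBlock.2 B' h1 h3), hBc, hBo⟩
  obtain ⟨c, hc1, hc2⟩ := ERT.main Set.univ.ncard Set.univ rfl hconn' L
    (fun x _ => by rw [← hdeg]; exact hL x) hcert
  exact ⟨c, fun v => hc1 v (Set.mem_univ v),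
    fun u v hadj => hc2 u (Set.mem_univ u) v (Set.mem_univ v) hadj⟩
end
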